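/- arXiv:1705.05176 — 7 statements merged into one kernel-verified Lean document; each statement's English description precedes it below -/
import Mathlib

section
/- Let a, b, c, d be four distinct points in ℝ² with no three of them collinear. Among the three pairings of the four points into two segments, namely {(a,b),(c,d)}, {(a,c),(b,d)}, {(a,d),(b,c)}, exactly one pairing consists of two crossing open segments if the four points are in convex position, and no pairing consists of crossing open segments otherwise. In particular, at most one of the three pairings yields a crossing. -/
/-- Twice the signed area of triangle `p q r`. -/
def dtr (p q r : ℝ × ℝ) : ℝ := (q.1 - p.1) * (r.2 - p.2) - (q.2 - p.2) * (r.1 - p.1)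

lemma collinear_of_dtr_eq_zero {p q r : ℝ × ℝ} (h : dtr p q r = 0) :
    Collinear ℝ ({p, q, r} : Set (ℝ × ℝ)) := by
  rw [collinear_iff_of_mem (Set.mem_insert p _)]
  rcases eq_or_ne q p with hq | hq
  · refine ⟨r - p, ?_⟩
    rintro x (rfl | rfl | rfl)
    · exact ⟨0, by simp⟩
    · exact ⟨0, by simp [hq]⟩
    · exact ⟨1, by simp⟩
  · refine ⟨q - p, ?_⟩
    have hq' : q.1 - p.1 ≠ 0 ∨ q.2 - p.2 ≠ 0 := by
      by_contra hcon
      push_neg at hcon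
      exact hq (by ext <;> [linarith [hcon.1]; linarith [hcon.2]])
    rintro x (rfl | rfl | rfl)
    · exact ⟨0, by simp⟩
    · exact ⟨1, by simp⟩
    · unfold dtr at h
      rcases hq' with h1 | h2
      · refine ⟨(x.1 - p.1) / (q.1 - p.1), ?_⟩
        have h2 : (x.1 - p.1) / (q.1 - p.1) * (q.2 - p.2) = x.2 - p.2 := by
          field_simp
          nlinarith [h]
        have h3 : (x.1 - p.1) / (q.1 - p.1) * (q.1 - p.1) = x.1 - p.1 :=
          div_mul_cancel₀ _ h1
        show x = _ • (q - p) + p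
        ext
        · simp only [Prod.fst_add, Prod.smul_fst, Prod.fst_sub, smul_eq_mul]
          linarith [h3]
        · simp only [Prod.snd_add, Prod.smul_snd, Prod.snd_sub, smul_eq_mul]
          linarith [h2]
      · refine ⟨(x.2 - p.2) / (q.2 - p.2), ?_⟩
        have h1 : (x.2 - p.2) / (q.2 - p.2) * (q.1 - p.1) = x.1 - p.1 := by
          field_simp
          nlinarith [h]
        have h3 : (x.2 - p.2) / (q.2 - p.2) * (q.2 - p.2) = x.2 - p.2 :=
          div_mul_cancel₀ _ h2
        show x = _ • (q - p) + p
        ext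
        · simp only [Prod.fst_add, Prod.smul_fst, Prod.fst_sub, smul_eq_mul]
          linarith [h1]
        · simp only [Prod.snd_add, Prod.smul_snd, Prod.snd_sub, smul_eq_mul]
          linarith [h3]

lemma dtr_ne {p q r : ℝ × ℝ} (h : ¬ Collinear ℝ ({p, q, r} : Set (ℝ × ℝ))) : dtr p q r ≠ 0 :=
  fun hz => h (collinear_of_dtr_eq_zero hz)



lemma ratio_mem {A B : ℝ} (h : A * B < 0) : 0 < A / (A - B) ∧ A / (A - B) < 1 := by
  rcases mul_neg_iff.mp h with ⟨hA, hB⟩ | ⟨hA, hB⟩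
  · have hd : 0 < A - B := by linarith
    exact ⟨div_pos hA hd, (div_lt_one hd).mpr (by linarith)⟩
  · have hd : A - B < 0 := by linarith
    refine ⟨div_pos_of_neg_of_neg hA hd, ?_⟩
    rw [div_lt_one_iff]
    right; right; exact ⟨hd, by linarith⟩

lemma dtr_affine (p q r s : ℝ × ℝ) (g h : ℝ) (hg : g + h = 1) :
    dtr p q (g • r + h • s) = g * dtr p q r + h * dtr p q s := by
  have hg' : h = 1 - g := by linarith
  subst hg'
  simp only [dtr, Prod.fst_add, Prod.snd_add, Prod.smul_fst, Prod.smul_snd, smul_eq_mul]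
  ring

lemma comb_of_sub {x p q : ℝ × ℝ} {k : ℝ}
    (h1 : x.1 - p.1 = k * (q.1 - p.1)) (h2 : x.2 - p.2 = k * (q.2 - p.2)) :
    x = (1 - k) • p + k • q := by
  ext
  · simp only [Prod.fst_add, Prod.smul_fst, smul_eq_mul]
    linear_combination h1
  · simp only [Prod.snd_add, Prod.smul_snd, smul_eq_mul]
    linear_combination h2

lemma opp_sign {P Q R S x : ℝ × ℝ} {g h : ℝ} (hg : 0 < g) (hh : 0 < h) (hgh : g + h = 1)
    (hz : dtr P Q x = 0) (hne : dtr P Q R ≠ 0) (hx : x = g • R + h • S) :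
    dtr P Q R * dtr P Q S < 0 := by
  have haff := dtr_affine P Q R S g h hgh
  rw [← hx, hz] at haff
  have hs' : dtr P Q S = -(g / h) * dtr P Q R := by
    field_simp
    linarith
  rw [hs']
  have hgh' : 0 < g / h := div_pos hg hh
  nlinarith [sq_pos_of_ne_zero hne, sq_nonneg (dtr P Q R)]

lemma segCross_iff {p q r s : ℝ × ℝ}
    (h1 : dtr p q r ≠ 0) (h3 : dtr r s p ≠ 0) :
    (openSegment ℝ p q ∩ openSegment ℝ r s).Nonempty ↔
      dtr p q r * dtr p q s < 0 ∧ dtr r s p * dtr r s q < 0 := by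
  constructor
  · rintro ⟨x, ⟨e, f, he, hf, hef, hx1⟩, ⟨g, h, hg, hh, hgh, hx2⟩⟩
    constructor
    · refine opp_sign hg hh hgh ?_ h1 hx2.symm
      have hf' : x - p = f • (q - p) := by
        rw [← hx1]; have : e = 1 - f := by linarith
        subst this; ext <;> simp <;> ring
      have h1' : x.1 - p.1 = f * (q.1 - p.1) := by
        have := congrArg Prod.fst hf'; simpa using this
      have h2' : x.2 - p.2 = f * (q.2 - p.2) := by
        have := congrArg Prod.snd hf'; simpa using this
      simp only [dtr]
      rw [h1', h2']; ring
    · refine opp_sign he hf hef ?_ h3 hx1.symm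
      have hf' : x - r = h • (s - r) := by
        rw [← hx2]; have : g = 1 - h := by linarith
        subst this; ext <;> simp <;> ring
      have h1' : x.1 - r.1 = h * (s.1 - r.1) := by
        have := congrArg Prod.fst hf'; simpa using this
      have h2' : x.2 - r.2 = h * (s.2 - r.2) := by
        have := congrArg Prod.snd hf'; simpa using this
      simp only [dtr]
      rw [h1', h2']; ring
  · rintro ⟨hA, hB⟩
    set t := dtr p q r / (dtr p q r - dtr p q s) with ht
    obtain ⟨ht0, ht1⟩ := ratio_mem hA
    set x := (1 - t) • r + t • s with hx
    have hxrs : x ∈ openSegment ℝ r s := ⟨1 - t, t, by linarith, ht0, by ring, rfl⟩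
    have hdne : dtr p q r - dtr p q s ≠ 0 := by
      intro hz
      rw [sub_eq_zero] at hz
      rw [hz] at hA
      nlinarith
    have hfx : dtr p q x = 0 := by
      rw [hx, dtr_affine p q r s (1 - t) t (by ring), ht]
      field_simp
      ring
    -- x lies on the line pq : find k with x = (1-k) • p + k • q
    have hkex : ∃ k : ℝ, x = (1 - k) • p + k • q := by
      simp only [dtr] at hfx
      rcases eq_or_ne (q.1 - p.1) 0 with hq1 | hq1
      · have hq2 : q.2 - p.2 ≠ 0 := by
          intro hz; apply h1; simp only [dtr]; rw [hq1, hz]; ring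
        refine ⟨(x.2 - p.2) / (q.2 - p.2), comb_of_sub ?_ ?_⟩
        · rw [hq1, mul_zero]
          rw [hq1] at hfx
          have := mul_left_cancel₀ hq2 (show (q.2 - p.2) * (x.1 - p.1) = (q.2 - p.2) * 0 by
            rw [mul_zero]; linarith)
          linarith
        · rw [div_mul_cancel₀ _ hq2]
      · refine ⟨(x.1 - p.1) / (q.1 - p.1), comb_of_sub ?_ ?_⟩
        · rw [div_mul_cancel₀ _ hq1]
        · field_simp
          nlinarith [hfx]
    obtain ⟨k, hk⟩ := hkex
    have hgx : dtr r s x = 0 := by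
      have hxr : x - r = t • (s - r) := by
        rw [hx]; ext <;> simp <;> ring
      have h1' : x.1 - r.1 = t * (s.1 - r.1) := by
        have := congrArg Prod.fst hxr; simpa using this
      have h2' : x.2 - r.2 = t * (s.2 - r.2) := by
        have := congrArg Prod.snd hxr; simpa using this
      simp only [dtr]
      rw [h1', h2']; ring
    have haff : (1 - k) * dtr r s p + k * dtr r s q = 0 := by
      rw [← dtr_affine r s p q (1 - k) k (by ring), ← hk, hgx]
    have hkval : k = dtr r s p / (dtr r s p - dtr r s q) := by
      have hd : dtr r s p - dtr r s q ≠ 0 := by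
        intro hz; rw [sub_eq_zero] at hz; rw [hz] at hB; nlinarith
      field_simp
      linarith
    obtain ⟨hk0, hk1⟩ := hkval ▸ ratio_mem hB
    exact ⟨x, ⟨1 - k, k, by linarith, hk0, by ring, hk.symm⟩, hxrs⟩



open Set

lemma dtr_self (P Q : ℝ × ℝ) : dtr P Q P = 0 := by simp [dtr]
lemma dtr_snd (P Q : ℝ × ℝ) : dtr P Q Q = 0 := by simp [dtr]; ring
lemma dtr_deg (P R : ℝ × ℝ) : dtr P P R = 0 := by simp [dtr]

lemma mem_hull_triple {p q r x : ℝ × ℝ} (hx : x ∈ convexHull ℝ ({p, q, r} : Set (ℝ × ℝ))) :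
    ∃ e f g : ℝ, 0 ≤ e ∧ 0 ≤ f ∧ 0 ≤ g ∧ e + f + g = 1 ∧ x = e • p + f • q + g • r := by
  rw [convexHull_insert (insert_nonempty q {r}), convexHull_pair] at hx
  rw [mem_convexJoin] at hx
  obtain ⟨u, hu, z, hz, hseg⟩ := hx
  rw [mem_singleton_iff] at hu
  subst hu
  obtain ⟨g1, h1, hg1, hh1, hgh1, hz1⟩ := hz
  obtain ⟨e1, f1, he1, hf1, hef1, hx1⟩ := hseg
  refine ⟨e1, f1 * g1, f1 * h1, he1, mul_nonneg hf1 hg1, mul_nonneg hf1 hh1, by nlinarith, ?_⟩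
  rw [← hx1, ← hz1]
  ext <;> simp <;> ring

lemma dtr_nonneg_of_mem_hull {p q r x : ℝ × ℝ}
    (hx : x ∈ convexHull ℝ ({p, q, r} : Set (ℝ × ℝ))) :
    0 ≤ dtr p q x * dtr p q r := by
  obtain ⟨e, f, g, he, hf, hg, hefg, hxv⟩ := mem_hull_triple hx
  have hdx : dtr p q x = g * dtr p q r := by
    have hx1 : x.1 = e * p.1 + f * q.1 + g * r.1 := by
      have := congrArg Prod.fst hxv; simpa using this
    have hx2 : x.2 = e * p.2 + f * q.2 + g * r.2 := by
      have := congrArg Prod.snd hxv; simpa using this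
    simp only [dtr]
    rw [hx1, hx2]
    have he' : e = 1 - f - g := by linarith
    subst he'
    ring
  rw [hdx]
  nlinarith [sq_nonneg (dtr p q r)]

/-- If `x ∈ S` and `x` is not in the convex hull of `S` minus `x`, then `x` is an extreme
point of the convex hull of `S`. -/
lemma extreme_of_notMem_hull_diff {S : Set (ℝ × ℝ)} {x : ℝ × ℝ} (hxS : x ∈ S)
    (hne : (S \ {x}).Nonempty) (hx : x ∉ convexHull ℝ (S \ {x})) :
    x ∈ Set.extremePoints ℝ (convexHull ℝ S) := by
  have hSins : S = insert x (S \ {x}) := by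
    rw [Set.insert_diff_singleton, Set.insert_eq_self.mpr hxS]
  refine ⟨subset_convexHull ℝ S hxS, ?_⟩
  intro x1 hx1 x2 hx2 hseg
  rw [hSins, convexHull_insert hne, mem_convexJoin] at hx1 hx2
  obtain ⟨u1, hu1, y1, hy1, hs1⟩ := hx1
  obtain ⟨u2, hu2, y2, hy2, hs2⟩ := hx2
  rw [mem_singleton_iff] at hu1 hu2
  rw [hu1] at hs1
  rw [hu2] at hs2
  obtain ⟨u, u', hu, hu', huu, hx1e⟩ := hs1
  obtain ⟨v, v', hv, hv', hvv, hx2e⟩ := hs2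
  obtain ⟨θ, θ', hθ, hθ', hθθ, hxe⟩ := hseg
  have hxe1 : θ * x1.1 + θ' * x2.1 = x.1 := by
    have := congrArg Prod.fst hxe; simpa using this
  have hxe2 : θ * x1.2 + θ' * x2.2 = x.2 := by
    have := congrArg Prod.snd hxe; simpa using this
  have h1e1 : u * x.1 + u' * y1.1 = x1.1 := by
    have := congrArg Prod.fst hx1e; simpa using this
  have h1e2 : u * x.2 + u' * y1.2 = x1.2 := by
    have := congrArg Prod.snd hx1e; simpa using this
  have h2e1 : v * x.1 + v' * y2.1 = x2.1 := by
    have := congrArg Prod.fst hx2e; simpa using this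
  have h2e2 : v * x.2 + v' * y2.2 = x2.2 := by
    have := congrArg Prod.snd hx2e; simpa using this
  set A := θ * u' with hA
  set B := θ' * v' with hB
  have hkey1 : (A + B) * x.1 = A * y1.1 + B * y2.1 := by
    rw [hA, hB]
    linear_combination (-1 : ℝ) * hxe1 - θ * h1e1 - θ' * h2e1 + x.1 * θ * huu +
      x.1 * θ' * hvv + x.1 * hθθ
  have hkey2 : (A + B) * x.2 = A * y1.2 + B * y2.2 := by
    rw [hA, hB]
    linear_combination (-1 : ℝ) * hxe2 - θ * h1e2 - θ' * h2e2 + x.2 * θ * huu +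
      x.2 * θ' * hvv + x.2 * hθθ
  have hAnn : 0 ≤ A := mul_nonneg hθ.le hu'
  have hBnn : 0 ≤ B := mul_nonneg hθ'.le hv'
  rcases eq_or_lt_of_le (by positivity : (0:ℝ) ≤ A + B) with hAB | hAB
  · -- A = B = 0, hence u' = v' = 0, so x1 = x and x2 = x
    have hA0 : A = 0 := by linarith
    have hB0 : B = 0 := by linarith
    have hu'0 : u' = 0 := by
      rcases mul_eq_zero.mp hA0.symm.symm with h | h
      · linarith
      · exact h
    have hv'0 : v' = 0 := by
      rcases mul_eq_zero.mp hB0.symm.symm with h | h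
      · linarith
      · exact h
    have hu1' : u = 1 := by linarith
    have hv1' : v = 1 := by linarith
    refine (show x1 = x ∧ x2 = x from ⟨?_, ?_⟩).1
    · rw [← hx1e, hu'0, hu1']
      simp
    · rw [← hx2e, hv'0, hv1']
      simp
  · -- x would be in the hull of S \ {x}
    exfalso
    apply hx
    have hABne : A + B ≠ 0 := ne_of_gt hAB
    have hmem : (A / (A + B)) • y1 + (B / (A + B)) • y2 ∈ convexHull ℝ (S \ {x}) := by
      apply (convex_convexHull ℝ _) hy1 hy2 (div_nonneg hAnn hAB.le) (div_nonneg hBnn hAB.le)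
      field_simp
    have hxeq : x = (A / (A + B)) • y1 + (B / (A + B)) • y2 := by
      ext
      · simp only [Prod.fst_add, Prod.smul_fst, smul_eq_mul]
        rw [div_mul_eq_mul_div, div_mul_eq_mul_div, ← add_div, eq_div_iff hABne]
        linarith [hkey1]
      · simp only [Prod.snd_add, Prod.smul_snd, smul_eq_mul]
        rw [div_mul_eq_mul_div, div_mul_eq_mul_div, ← add_div, eq_div_iff hABne]
        linarith [hkey2]
    rwa [← hxeq] at hmem

/-- If the two products of orientations are negative (segments pq and rs cross), then
all four points are extreme points of the convex hull. -/
lemma fourExtreme_of_cross {p q r s : ℝ × ℝ}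
    (h1 : dtr p q r * dtr p q s < 0) (h2 : dtr r s p * dtr r s q < 0) :
    ∀ x ∈ ({p, q, r, s} : Set (ℝ × ℝ)),
      x ∈ Set.extremePoints ℝ (convexHull ℝ ({p, q, r, s} : Set (ℝ × ℝ))) := by
  have hrsp : dtr r s p ≠ 0 := fun h => by rw [h] at h2; simp at h2
  have hrsq : dtr r s q ≠ 0 := fun h => by rw [h] at h2; simp at h2
  have hpr : p ≠ r := by intro h; apply hrsp; rw [h]; exact dtr_self r s
  have hps : p ≠ s := by intro h; apply hrsp; rw [h]; exact dtr_snd r s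
  have hqr : q ≠ r := by intro h; apply hrsq; rw [h]; exact dtr_self r s
  have hep : p ∈ Set.extremePoints ℝ (convexHull ℝ ({p, q, r, s} : Set (ℝ × ℝ))) := by
    apply extreme_of_notMem_hull_diff (by simp : p ∈ ({p,q,r,s} : Set (ℝ × ℝ)))
      ⟨r, by simp, by simp [hpr.symm]⟩
    intro hmem
    have hsub : ({p, q, r, s} : Set (ℝ × ℝ)) \ {p} ⊆ {r, s, q} := by
      intro y hy
      have hy1 := hy.1
      simp only [Set.mem_insert_iff, Set.mem_singleton_iff] at hy1
      rcases hy1 with h | h | h | h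
      · exact absurd (by simp [h]) hy.2
      · simp [h]
      · simp [h]
      · simp [h]
    have := dtr_nonneg_of_mem_hull (convexHull_mono hsub hmem)
    nlinarith [h2]
  have heq : q ∈ Set.extremePoints ℝ (convexHull ℝ ({p, q, r, s} : Set (ℝ × ℝ))) := by
    apply extreme_of_notMem_hull_diff (by simp : q ∈ ({p,q,r,s} : Set (ℝ × ℝ)))
      ⟨r, by simp, by simp [hqr.symm]⟩
    intro hmem
    have hsub : ({p, q, r, s} : Set (ℝ × ℝ)) \ {q} ⊆ {r, s, p} := by
      intro y hy
      have hy1 := hy.1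
      simp only [Set.mem_insert_iff, Set.mem_singleton_iff] at hy1
      rcases hy1 with h | h | h | h
      · simp [h]
      · exact absurd (by simp [h]) hy.2
      · simp [h]
      · simp [h]
    have := dtr_nonneg_of_mem_hull (convexHull_mono hsub hmem)
    nlinarith [h2]
  have her : r ∈ Set.extremePoints ℝ (convexHull ℝ ({p, q, r, s} : Set (ℝ × ℝ))) := by
    apply extreme_of_notMem_hull_diff (by simp : r ∈ ({p,q,r,s} : Set (ℝ × ℝ)))
      ⟨p, by simp, by simp [hpr]⟩
    intro hmem
    have hsub : ({p, q, r, s} : Set (ℝ × ℝ)) \ {r} ⊆ {p, q, s} := by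
      intro y hy
      have hy1 := hy.1
      simp only [Set.mem_insert_iff, Set.mem_singleton_iff] at hy1
      rcases hy1 with h | h | h | h
      · simp [h]
      · simp [h]
      · exact absurd (by simp [h]) hy.2
      · simp [h]
    have := dtr_nonneg_of_mem_hull (convexHull_mono hsub hmem)
    nlinarith [h1]
  have hes : s ∈ Set.extremePoints ℝ (convexHull ℝ ({p, q, r, s} : Set (ℝ × ℝ))) := by
    apply extreme_of_notMem_hull_diff (by simp : s ∈ ({p,q,r,s} : Set (ℝ × ℝ)))
      ⟨p, by simp, by simp [hps]⟩
    intro hmem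
    have hsub : ({p, q, r, s} : Set (ℝ × ℝ)) \ {s} ⊆ {p, q, r} := by
      intro y hy
      have hy1 := hy.1
      simp only [Set.mem_insert_iff, Set.mem_singleton_iff] at hy1
      rcases hy1 with h | h | h | h
      · simp [h]
      · simp [h]
      · simp [h]
      · exact absurd (by simp [h]) hy.2
    have := dtr_nonneg_of_mem_hull (convexHull_mono hsub hmem)
    nlinarith [h1]
  intro x hx
  rcases hx with h | h | h | h
  · rw [h]; exact hep
  · rw [h]; exact heq
  · rw [h]; exact her
  · rw [h]; exact hes

/-- A point that is a strict convex combination of three points of `S` is not extreme. -/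
lemma not_extreme_inside {S : Set (ℝ × ℝ)} {x p q r : ℝ × ℝ} {w1 w2 w3 : ℝ}
    (hw1 : 0 < w1) (hw2 : 0 < w2) (hw3 : 0 < w3) (hsum : w1 + w2 + w3 = 1)
    (hx : x = w1 • p + w2 • q + w3 • r) (hxp : x ≠ p)
    (hp : p ∈ S) (hq : q ∈ S) (hr : r ∈ S) :
    x ∉ Set.extremePoints ℝ (convexHull ℝ S) := by
  intro hext
  set m : ℝ × ℝ := (w2 / (w2 + w3)) • q + (w3 / (w2 + w3)) • r with hm
  have hw23 : 0 < w2 + w3 := by linarith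
  have hmS : m ∈ convexHull ℝ S := by
    apply (convex_convexHull ℝ S) (subset_convexHull ℝ S hq) (subset_convexHull ℝ S hr)
      (by positivity) (by positivity)
    field_simp
  have hseg : x ∈ openSegment ℝ p m := by
    refine ⟨w1, w2 + w3, hw1, hw23, by linarith, ?_⟩
    rw [hm, hx]
    ext
    · simp only [Prod.fst_add, Prod.smul_fst, smul_eq_mul]
      field_simp
      ring
    · simp only [Prod.snd_add, Prod.smul_snd, smul_eq_mul]
      field_simp
      ring
  exact hxp ((hext.2 (subset_convexHull ℝ S hp) hmS hseg).symm)



lemma dtr_cyc (p q r : ℝ × ℝ) : dtr p q r = dtr q r p := by simp only [dtr]; ring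
lemma dtr_swap (p q r : ℝ × ℝ) : dtr p q r = - dtr p r q := by simp only [dtr]; ring
lemma dtr_decomp (a b c d : ℝ × ℝ) : dtr a b c = dtr a b d + dtr a d c + dtr b c d := by
  simp only [dtr]; ring

lemma mulD_neg_iff {D x : ℝ} (h : 0 < D * D) : x * (D * D) < 0 ↔ x < 0 := by
  constructor
  · intro hx; nlinarith
  · intro hx; exact mul_neg_of_neg_of_pos hx h

lemma mulD_pos_iff {D x : ℝ} (h : 0 < D * D) : 0 < x * (D * D) ↔ 0 < x := by
  constructor
  · intro hx; nlinarith
  · intro hx; exact mul_pos hx h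

lemma comb3 {al sc tc : ℝ} {A B C P : ℝ × ℝ} (hal : al ≠ 0)
    (h1 : P.1 = al * A.1 + sc * B.1 + tc * C.1)
    (h2 : P.2 = al * A.2 + sc * B.2 + tc * C.2) :
    A = (-sc / al) • B + (-tc / al) • C + (1 / al) • P := by
  ext
  · simp only [Prod.fst_add, Prod.smul_fst, smul_eq_mul]
    rw [div_mul_eq_mul_div, div_mul_eq_mul_div, div_mul_eq_mul_div, ← add_div,
      ← add_div, eq_div_iff hal]
    linear_combination -h1
  · simp only [Prod.snd_add, Prod.smul_snd, smul_eq_mul]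
    rw [div_mul_eq_mul_div, div_mul_eq_mul_div, div_mul_eq_mul_div, ← add_div,
      ← add_div, eq_div_iff hal]
    linear_combination -h2

lemma sum3 {al sc tc : ℝ} (hal : al ≠ 0) (h : al + sc + tc = 1) :
    -sc / al + -tc / al + 1 / al = 1 := by
  rw [← add_div, ← add_div, div_eq_one_iff_eq hal]
  linarith

/-- The open segments joining `p` to `q` and `r` to `s` cross, i.e. have a common point. -/
def SegCross (p q r s : ℝ × ℝ) : Prop :=
  (openSegment ℝ p q ∩ openSegment ℝ r s).Nonempty

/-- Four points are in convex position: each is an extreme point of their convex hull. -/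
def FourConvexPos (a b c d : ℝ × ℝ) : Prop :=
  ∀ x ∈ ({a, b, c, d} : Set (ℝ × ℝ)),
    x ∈ Set.extremePoints ℝ (convexHull ℝ ({a, b, c, d} : Set (ℝ × ℝ)))

set_option maxHeartbeats 4000000 in
/-- For four distinct points, no three collinear: if they are in convex position then
exactly one of the three pairings into two segments crosses, and otherwise none does. -/
theorem pairings_of_four_points (a b c d : ℝ × ℝ)
    (hab : a ≠ b) (hac : a ≠ c) (had : a ≠ d) (hbc : b ≠ c) (hbd : b ≠ d) (hcd : c ≠ d)
    (habc : ¬ Collinear ℝ ({a, b, c} : Set (ℝ × ℝ)))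
    (habd : ¬ Collinear ℝ ({a, b, d} : Set (ℝ × ℝ)))
    (hacd : ¬ Collinear ℝ ({a, c, d} : Set (ℝ × ℝ)))
    (hbcd : ¬ Collinear ℝ ({b, c, d} : Set (ℝ × ℝ))) :
    (FourConvexPos a b c d →
      ((SegCross a b c d ∧ ¬ SegCross a c b d ∧ ¬ SegCross a d b c) ∨
       (¬ SegCross a b c d ∧ SegCross a c b d ∧ ¬ SegCross a d b c) ∨
       (¬ SegCross a b c d ∧ ¬ SegCross a c b d ∧ SegCross a d b c))) ∧
    (¬ FourConvexPos a b c d →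
      (¬ SegCross a b c d ∧ ¬ SegCross a c b d ∧ ¬ SegCross a d b c)) := by
  have hDne : dtr a b c ≠ 0 := dtr_ne habc
  obtain ⟨D, hDdef⟩ : ∃ D, D = dtr a b c := ⟨_, rfl⟩
  have hD : D ≠ 0 := hDdef ▸ hDne
  have hD2 : 0 < D * D := mul_self_pos.mpr hD
  obtain ⟨s, hsdef⟩ : ∃ s, s = dtr a d c / D := ⟨_, rfl⟩
  obtain ⟨t, htdef⟩ : ∃ t, t = dtr a b d / D := ⟨_, rfl⟩
  have vabd : dtr a b d = t * D := by rw [htdef, div_mul_cancel₀ _ hD]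
  have vadc : dtr a d c = s * D := by rw [hsdef, div_mul_cancel₀ _ hD]
  have vacd : dtr a c d = -(s * D) := by rw [dtr_swap a c d, ← vadc]
  have vbcd : dtr b c d = (1 - s - t) * D := by
    have h0 := dtr_decomp a b c d
    rw [vabd, vadc, ← hDdef] at h0
    linarith [h0]
  have hs : s ≠ 0 := by
    intro h
    apply dtr_ne hacd
    rw [vacd, h]; ring
  have ht : t ≠ 0 := by
    intro h
    apply dtr_ne habd
    rw [vabd, h]; ring
  have hal : 1 - s - t ≠ 0 := by
    intro h
    apply dtr_ne hbcd
    rw [vbcd, h]; ring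
  -- barycentric representation of d
  have hd1 : d.1 = (1 - s - t) * a.1 + s * b.1 + t * c.1 := by
    rw [hsdef, htdef, hDdef]
    field_simp
    simp only [dtr]
    ring
  have hd2 : d.2 = (1 - s - t) * a.2 + s * b.2 + t * c.2 := by
    rw [hsdef, htdef, hDdef]
    field_simp
    simp only [dtr]
    ring
  -- the three crossing criteria
  have hiff1 : SegCross a b c d ↔ (t < 0 ∧ 0 < s * (1 - s - t)) := by
    have h3 : dtr c d a ≠ 0 := by
      rw [show dtr c d a = dtr a c d from (dtr_cyc a c d).symm, vacd]
      intro h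
      rcases mul_eq_zero.mp (neg_eq_zero.mp h) with h | h
      exacts [hs h, hD h]
    have base : SegCross a b c d ↔
        dtr a b c * dtr a b d < 0 ∧ dtr c d a * dtr c d b < 0 := segCross_iff hDne h3
    rw [base, ← hDdef, vabd, show dtr c d a = dtr a c d from (dtr_cyc a c d).symm, vacd,
      show dtr c d b = dtr b c d from (dtr_cyc b c d).symm, vbcd,
      show D * (t * D) = t * (D * D) from by ring,
      show -(s * D) * ((1 - s - t) * D) = -(s * (1 - s - t) * (D * D)) from by ring,
      mulD_neg_iff hD2, neg_lt_zero, mulD_pos_iff hD2]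
  have hiff2 : SegCross a c b d ↔ (s < 0 ∧ 0 < t * (1 - s - t)) := by
    have h1 : dtr a c b ≠ 0 := by
      rw [dtr_swap a c b]
      simpa using hDne
    have h3 : dtr b d a ≠ 0 := by
      rw [show dtr b d a = dtr a b d from (dtr_cyc a b d).symm, vabd]
      intro h
      rcases mul_eq_zero.mp h with h | h
      exacts [ht h, hD h]
    have base : SegCross a c b d ↔
        dtr a c b * dtr a c d < 0 ∧ dtr b d a * dtr b d c < 0 := segCross_iff h1 h3
    rw [base, dtr_swap a c b, ← hDdef, vacd,
      show dtr b d a = dtr a b d from (dtr_cyc a b d).symm, vabd,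
      dtr_swap b d c, vbcd,
      show -D * -(s * D) = s * (D * D) from by ring,
      show t * D * -((1 - s - t) * D) = -(t * (1 - s - t) * (D * D)) from by ring,
      mulD_neg_iff hD2, neg_lt_zero, mulD_pos_iff hD2]
  have hiff3 : SegCross a d b c ↔ (0 < s * t ∧ 1 - s - t < 0) := by
    have h1 : dtr a d b ≠ 0 := by
      rw [dtr_swap a d b, vabd]
      intro h
      rcases mul_eq_zero.mp (neg_eq_zero.mp h) with h | h
      exacts [ht h, hD h]
    have h3 : dtr b c a ≠ 0 := by
      rw [show dtr b c a = dtr a b c from by rw [dtr_cyc b c a, dtr_cyc c a b]]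
      exact hDne
    have base : SegCross a d b c ↔
        dtr a d b * dtr a d c < 0 ∧ dtr b c a * dtr b c d < 0 := segCross_iff h1 h3
    rw [base, dtr_swap a d b, vabd, vadc,
      show dtr b c a = dtr a b c from by rw [dtr_cyc b c a, dtr_cyc c a b], ← hDdef, vbcd,
      show -(t * D) * (s * D) = -(s * t * (D * D)) from by ring,
      show D * ((1 - s - t) * D) = (1 - s - t) * (D * D) from by ring,
      mulD_neg_iff hD2, neg_lt_zero, mulD_pos_iff hD2]
  rw [hiff1, hiff2, hiff3]
  rcases lt_or_gt_of_ne hs with hs' | hs' <;>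
    rcases lt_or_gt_of_ne ht with ht' | ht' <;>
      rcases lt_or_gt_of_ne hal with hal' | hal'
  -- case s<0, t<0, al<0 : impossible
  · exfalso; linarith
  -- case s<0, t<0, al>0 : a inside b c d, no crossing
  · have hnc : ¬ FourConvexPos a b c d := by
      intro hF
      have havec := comb3 hal hd1 hd2
      exact not_extreme_inside (div_pos (by linarith) hal') (div_pos (by linarith) hal')
        (div_pos one_pos hal') (sum3 hal (by ring)) havec hab
        (by simp) (by simp) (by simp) (hF a (by simp))
    refine ⟨fun h => absurd h hnc, fun _ => ⟨?_, ?_, ?_⟩⟩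
    · rintro ⟨h1', h2'⟩; linarith [mul_neg_of_neg_of_pos hs' hal']
    · rintro ⟨h1', h2'⟩; linarith [mul_neg_of_neg_of_pos ht' hal']
    · rintro ⟨h1', h2'⟩; linarith
  -- case s<0, t>0, al<0 : c inside a b d, no crossing
  · have hnc : ¬ FourConvexPos a b c d := by
      intro hF
      have hcvec := comb3 (al := t) (sc := 1 - s - t) (tc := s)
        (A := c) (B := a) (C := b) (P := d) ht
        (by linear_combination hd1) (by linear_combination hd2)
      exact not_extreme_inside (div_pos (by linarith) ht') (div_pos (by linarith) ht')
        (div_pos one_pos ht') (sum3 ht (by ring)) hcvec hac.symm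
        (by simp) (by simp) (by simp) (hF c (by simp))
    refine ⟨fun h => absurd h hnc, fun _ => ⟨?_, ?_, ?_⟩⟩
    · rintro ⟨h1', h2'⟩; linarith
    · rintro ⟨h1', h2'⟩; linarith [mul_neg_of_pos_of_neg ht' hal']
    · rintro ⟨h1', h2'⟩; linarith [mul_neg_of_neg_of_pos hs' ht']
  -- case s<0, t>0, al>0 : crossing a c / b d, convex
  · have hcvx : FourConvexPos a b c d := by
      have H := fourExtreme_of_cross (p := a) (q := c) (r := b) (s := d)
        (by rw [dtr_swap a c b, ← hDdef, vacd]
            nlinarith [mul_neg_of_neg_of_pos hs' hD2])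
        (by rw [show dtr b d a = dtr a b d from (dtr_cyc a b d).symm, vabd,
              dtr_swap b d c, vbcd]
            nlinarith [mul_pos (mul_pos ht' hal') hD2])
      have hset : ({a, c, b, d} : Set (ℝ × ℝ)) = {a, b, c, d} :=
        Set.insert_comm c b {d} ▸ rfl
      rw [hset] at H
      exact H
    refine ⟨fun _ => Or.inr (Or.inl ⟨?_, ⟨hs', mul_pos ht' hal'⟩, ?_⟩),
      fun h => absurd hcvx h⟩
    · rintro ⟨h1', h2'⟩; linarith
    · rintro ⟨h1', h2'⟩; linarith [mul_neg_of_neg_of_pos hs' ht']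
  -- case s>0, t<0, al<0 : b inside a c d, no crossing
  · have hnc : ¬ FourConvexPos a b c d := by
      intro hF
      have hbvec := comb3 (al := s) (sc := 1 - s - t) (tc := t)
        (A := b) (B := a) (C := c) (P := d) hs
        (by linear_combination hd1) (by linear_combination hd2)
      exact not_extreme_inside (div_pos (by linarith) hs') (div_pos (by linarith) hs')
        (div_pos one_pos hs') (sum3 hs (by ring)) hbvec hab.symm
        (by simp) (by simp) (by simp) (hF b (by simp))
    refine ⟨fun h => absurd h hnc, fun _ => ⟨?_, ?_, ?_⟩⟩
    · rintro ⟨h1', h2'⟩; linarith [mul_neg_of_pos_of_neg hs' hal']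
    · rintro ⟨h1', h2'⟩; linarith
    · rintro ⟨h1', h2'⟩; linarith [mul_neg_of_pos_of_neg hs' ht']
  -- case s>0, t<0, al>0 : crossing a b / c d, convex
  · have hcvx : FourConvexPos a b c d :=
      fourExtreme_of_cross (p := a) (q := b) (r := c) (s := d)
        (by rw [← hDdef, vabd]
            nlinarith [mul_neg_of_neg_of_pos ht' hD2])
        (by rw [show dtr c d a = dtr a c d from (dtr_cyc a c d).symm, vacd,
              show dtr c d b = dtr b c d from (dtr_cyc b c d).symm, vbcd]
            nlinarith [mul_pos (mul_pos hs' hal') hD2])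
    refine ⟨fun _ => Or.inl ⟨⟨ht', mul_pos hs' hal'⟩, ?_, ?_⟩, fun h => absurd hcvx h⟩
    · rintro ⟨h1', h2'⟩; linarith
    · rintro ⟨h1', h2'⟩; linarith [mul_neg_of_pos_of_neg hs' ht']
  -- case s>0, t>0, al<0 : crossing a d / b c, convex
  · have hcvx : FourConvexPos a b c d := by
      have H := fourExtreme_of_cross (p := a) (q := d) (r := b) (s := c)
        (by rw [dtr_swap a d b, vabd, vadc]
            nlinarith [mul_pos (mul_pos hs' ht') hD2])
        (by rw [show dtr b c a = dtr a b c from by rw [dtr_cyc b c a, dtr_cyc c a b],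
              ← hDdef, vbcd]
            nlinarith [mul_neg_of_neg_of_pos hal' hD2])
      have hset : ({a, d, b, c} : Set (ℝ × ℝ)) = {a, b, c, d} := by
        rw [Set.insert_comm d b, Set.pair_comm d c]
      rw [hset] at H
      exact H
    refine ⟨fun _ => Or.inr (Or.inr ⟨?_, ?_, ⟨mul_pos hs' ht', hal'⟩⟩),
      fun h => absurd hcvx h⟩
    · rintro ⟨h1', h2'⟩; linarith
    · rintro ⟨h1', h2'⟩; linarith
  -- case s>0, t>0, al>0 : d inside a b c, no crossing
  · have hnc : ¬ FourConvexPos a b c d := by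
      intro hF
      have hdvec : d = (1 - s - t) • a + s • b + t • c := by
        ext
        · simpa using hd1
        · simpa using hd2
      exact not_extreme_inside hal' hs' ht' (by ring) hdvec had.symm
        (by simp) (by simp) (by simp) (hF d (by simp))
    refine ⟨fun h => absurd h hnc, fun _ => ⟨?_, ?_, ?_⟩⟩
    · rintro ⟨h1', h2'⟩; linarith
    · rintro ⟨h1', h2'⟩; linarith
    · rintro ⟨h1', h2'⟩; linarith
end

section
/- Let k ≥ 1 and let σ be a convex drawing of the complete tripartite graph K_{k,k,k} with partition classes V₁, V₂, V₃ in which the images σ(V₁), σ(V₂), σ(V₃) occupy three pairwise disjoint cyclic intervals of ZMod (3k). Then every 4-cycle of K_{k,k,k} contains exactly one pair of independent edges that cross in σ. -/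
/-- Two edges (as unordered pairs of vertices) share no endpoint, i.e. they are independent. -/
def Sym2Indep {V : Type*} (e f : Sym2 V) : Prop := ∀ x : V, x ∈ e → x ∉ f

/-- `M(G)`: the number of unordered pairs of edges of `G` that share no endpoint. -/
noncomputable def indepPairs {V : Type*} (G : SimpleGraph V) : ℕ :=
  {p : Sym2 (Sym2 V) | ∃ e f : Sym2 V,
    p = s(e, f) ∧ e ∈ G.edgeSet ∧ f ∈ G.edgeSet ∧ Sym2Indep e f}.ncard

/-- `z` lies on the open cyclic arc from `x` to `y` in `ZMod n`. -/
def InArc {n : ℕ} (x y z : ZMod n) : Prop :=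
  0 < (z - x).val ∧ (z - x).val < (y - x).val

/-- The independent edges `e` and `f` cross in the convex drawing `σ`:
their endpoints alternate in the cyclic order. -/
def ConvexCross {V : Type*} {n : ℕ} (σ : V → ZMod n) (e f : Sym2 V) : Prop :=
  Sym2Indep e f ∧ ∃ a b c d : V, e = s(a, b) ∧ f = s(c, d) ∧
    Xor' (InArc (σ a) (σ b) (σ c)) (InArc (σ a) (σ b) (σ d))

/-- `cr(σ)`: the number of unordered pairs of edges of `G` that cross in the
convex drawing `σ`. -/
noncomputable def convexCr {V : Type*} {n : ℕ} (G : SimpleGraph V) (σ : V → ZMod n) : ℕ :=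
  {p : Sym2 (Sym2 V) | ∃ e f : Sym2 V,
    p = s(e, f) ∧ e ∈ G.edgeSet ∧ f ∈ G.edgeSet ∧ ConvexCross σ e f}.ncard

/-- A set of positions in `ZMod n` is a cyclic interval, i.e. a set of consecutive
positions `{a, a+1, …, a+k}`. -/
def IsCyclicInterval {n : ℕ} (S : Set (ZMod n)) : Prop :=
  ∃ (a : ZMod n) (k : ℕ), S = {z : ZMod n | ∃ j : ℕ, j ≤ k ∧ z = a + (j : ZMod n)}

/-- The complete tripartite graph `K_{k,k,k}`: vertices are pairs `(i, x)` with `i : Fin 3`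
the index of the partition class, and two vertices are adjacent iff they lie in distinct
classes. -/
def completeTripartite (k : ℕ) : SimpleGraph (Fin 3 × Fin k) :=
  SimpleGraph.fromRel (fun a b => a.1 ≠ b.1)

section Aux
variable {n : ℕ} [NeZero n]

lemma val_sub_char (u v : ZMod n) (h : u ≠ v) :
    0 < (u - v).val ∧ (u - v).val < n ∧
      (v.val + (u - v).val = u.val ∨ v.val + (u - v).val = u.val + n) := by
  have h0 : (u - v) ≠ 0 := sub_ne_zero.mpr h
  refine ⟨ZMod.val_pos.mpr h0, ZMod.val_lt _, ?_⟩
  have hadd : v + (u - v) = u := by ring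
  have hv := ZMod.val_add v (u - v)
  rw [hadd] at hv
  have h1 : v.val < n := ZMod.val_lt v
  have h2 : (u - v).val < n := ZMod.val_lt _
  rcases lt_or_ge (v.val + (u - v).val) n with hlt | hge
  · left; rw [Nat.mod_eq_of_lt hlt] at hv; omega
  · right
    have heq : (v.val + (u - v).val) % n = v.val + (u - v).val - n := by
      rw [Nat.mod_eq_sub_mod hge, Nat.mod_eq_of_lt (by omega)]
    omega

lemma inArc_flip {x y z : ZMod n} (hxy : x ≠ y) (hzx : z ≠ x) (hzy : z ≠ y) :
    InArc y x z ↔ ¬ InArc x y z := by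
  obtain ⟨a1, a2, a3⟩ := val_sub_char y x hxy.symm
  obtain ⟨b1, b2, b3⟩ := val_sub_char z x hzx
  obtain ⟨c1, c2, c3⟩ := val_sub_char x y hxy
  obtain ⟨d1, d2, d3⟩ := val_sub_char z y hzy
  simp only [InArc]
  omega

lemma interval_side {S : Set (ZMod n)} (hS : IsCyclicInterval S)
    {x y z t : ZMod n} (hx : x ∈ S) (hy : y ∈ S) (hz : z ∉ S) (ht : t ∉ S)
    (hxy : x ≠ y) (hzx : z ≠ x) (htx : t ≠ x) :
    InArc x y z ↔ InArc x y t := by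
  have hn : 0 < n := Nat.pos_of_ne_zero (NeZero.ne n)
  obtain ⟨a, K, hSeq⟩ := hS
  -- replace K by K' := min K (n-1)
  set K' := min K (n - 1) with hK'
  have hK'n : K' < n := by omega
  have hSeq' : S = {w : ZMod n | ∃ j : ℕ, j ≤ K' ∧ w = a + (j : ZMod n)} := by
    rw [hSeq]; ext w
    constructor
    · rintro ⟨j, hj, rfl⟩
      refine ⟨j % n, ?_, by rw [ZMod.natCast_mod]⟩
      have h1 := Nat.mod_le j n
      have h2 := Nat.mod_lt j hn
      omega
    · rintro ⟨j, hj, rfl⟩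
      exact ⟨j, by omega, rfl⟩
  -- membership characterization via (· - a).val
  have mem_iff : ∀ w : ZMod n, w ∈ S ↔ (w - a).val ≤ K' := by
    intro w
    rw [hSeq']
    constructor
    · rintro ⟨j, hj, rfl⟩
      have : (a + (j : ZMod n)) - a = (j : ZMod n) := by ring
      rw [this, ZMod.val_cast_of_lt (by omega)]
      exact hj
    · intro hle
      refine ⟨(w - a).val, hle, ?_⟩
      rw [ZMod.natCast_val, ZMod.cast_id]
      ring
  have hx' : (x - a).val ≤ K' := (mem_iff x).mp hx
  have hy' : (y - a).val ≤ K' := (mem_iff y).mp hy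
  have hz' : ¬ (z - a).val ≤ K' := fun h => hz ((mem_iff z).mpr h)
  have ht' : ¬ (t - a).val ≤ K' := fun h => ht ((mem_iff t).mpr h)
  have hzn : (z - a).val < n := ZMod.val_lt _
  have htn : (t - a).val < n := ZMod.val_lt _
  have e1 : y - a - (x - a) = y - x := by ring
  have e2 : z - a - (x - a) = z - x := by ring
  have e3 : t - a - (x - a) = t - x := by ring
  have hne : ∀ {u v : ZMod n}, u ≠ v → u - a ≠ v - a :=
    fun h hh => h (by linear_combination hh)
  have c1 := val_sub_char (y - a) (x - a) (hne hxy.symm)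
  have c2 := val_sub_char (z - a) (x - a) (hne hzx)
  have c3 := val_sub_char (t - a) (x - a) (hne htx)
  rw [e1] at c1; rw [e2] at c2; rw [e3] at c3
  obtain ⟨a1, a2, a3⟩ := c1
  obtain ⟨b1, b2, b3⟩ := c2
  obtain ⟨d1, d2, d3⟩ := c3
  simp only [InArc]
  omega

lemma convexCross_iff {V : Type*} (σ : V → ZMod n) (p q r s : V)
    (hpq : σ p ≠ σ q) (hpr : σ p ≠ σ r) (hps : σ p ≠ σ s)
    (hqr : σ q ≠ σ r) (hqs : σ q ≠ σ s) (_hrs : σ r ≠ σ s) :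
    ConvexCross σ s(p, q) s(r, s) ↔
      Xor' (InArc (σ p) (σ q) (σ r)) (InArc (σ p) (σ q) (σ s)) := by
  have flipr := inArc_flip hpq hpr.symm hqr.symm
  have flips := inArc_flip hpq hps.symm hqs.symm
  constructor
  · rintro ⟨-, a, b, c, d, he, hf, hx⟩
    rw [Sym2.eq_iff] at he hf
    rcases he with ⟨rfl, rfl⟩ | ⟨rfl, rfl⟩ <;>
      rcases hf with ⟨rfl, rfl⟩ | ⟨rfl, rfl⟩ <;>
      [skip; skip; rw [flipr, flips] at hx; rw [flipr, flips] at hx] <;>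
      simp only [Xor', xor_def] at hx ⊢ <;> tauto
  · intro hx
    refine ⟨?_, p, q, r, s, rfl, rfl, hx⟩
    intro v hv hv'
    rw [Sym2.mem_iff] at hv hv'
    rcases hv with rfl | rfl <;> rcases hv' with h' | h'
    · exact hpr (congrArg σ h')
    · exact hps (congrArg σ h')
    · exact hqr (congrArg σ h')
    · exact hqs (congrArg σ h')

end Aux

set_option maxHeartbeats 1000000 in
lemma final_nat1 (n W X Y Z bv cv dv fv gv iv jv : ℕ)
    (hW : W < n) (hX : X < n) (hY : Y < n) (hZ : Z < n)
    (b1 : 0 < bv) (b2 : bv < n) (b3 : W + bv = X ∨ W + bv = X + n)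
    (c1 : 0 < cv) (c2 : cv < n) (c3 : W + cv = Y ∨ W + cv = Y + n)
    (d1 : 0 < dv) (d2 : dv < n) (d3 : W + dv = Z ∨ W + dv = Z + n)
    (f1 : 0 < fv) (f2 : fv < n) (f3 : X + fv = Y ∨ X + fv = Y + n)
    (g1 : 0 < gv) (g2 : gv < n) (g3 : X + gv = Z ∨ X + gv = Z + n)
    (i1 : 0 < iv) (i2 : iv < n) (i3 : X + iv = W ∨ X + iv = W + n)
    (j1 : 0 < jv) (j2 : jv < n) (j3 : Y + jv = Z ∨ Y + jv = Z + n)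
    (H : (0 < bv ∧ bv < cv) ↔ (0 < dv ∧ dv < cv)) :
    Xor' (Xor' (0 < cv ∧ cv < bv) (0 < dv ∧ dv < bv))
      (Xor' (0 < gv ∧ gv < fv) (0 < iv ∧ iv < fv)) := by
  simp only [Xor', xor_def]
  omega


set_option maxHeartbeats 1000000 in
lemma final_nat2 (n W X Y Z bv cv dv fv gv iv jv : ℕ)
    (hW : W < n) (hX : X < n) (hY : Y < n) (hZ : Z < n)
    (b1 : 0 < bv) (b2 : bv < n) (b3 : W + bv = X ∨ W + bv = X + n)
    (c1 : 0 < cv) (c2 : cv < n) (c3 : W + cv = Y ∨ W + cv = Y + n)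
    (d1 : 0 < dv) (d2 : dv < n) (d3 : W + dv = Z ∨ W + dv = Z + n)
    (f1 : 0 < fv) (f2 : fv < n) (f3 : X + fv = Y ∨ X + fv = Y + n)
    (g1 : 0 < gv) (g2 : gv < n) (g3 : X + gv = Z ∨ X + gv = Z + n)
    (i1 : 0 < iv) (i2 : iv < n) (i3 : X + iv = W ∨ X + iv = W + n)
    (j1 : 0 < jv) (j2 : jv < n) (j3 : Y + jv = Z ∨ Y + jv = Z + n)
    (H : (0 < iv ∧ iv < gv) ↔ (0 < fv ∧ fv < gv)) :
    Xor' (Xor' (0 < cv ∧ cv < bv) (0 < dv ∧ dv < bv))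
      (Xor' (0 < gv ∧ gv < fv) (0 < iv ∧ iv < fv)) := by
  simp only [Xor', xor_def]
  omega

/-- In a convex drawing of `K_{k,k,k}` in which the three partition classes occupy cyclic
intervals, every 4-cycle contains exactly one crossing pair of independent edges. -/
theorem fourCycle_one_crossing_of_tripartite_intervals (k : ℕ) (hk : 1 ≤ k)
    (σ : Fin 3 × Fin k → ZMod (Fintype.card (Fin 3 × Fin k)))
    (hσ : Function.Injective σ)
    (hint : ∀ i : Fin 3, IsCyclicInterval (σ '' {v : Fin 3 × Fin k | v.1 = i}))
    (w x y z : Fin 3 × Fin k)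
    (hwx : (completeTripartite k).Adj w x) (hxy : (completeTripartite k).Adj x y)
    (hyz : (completeTripartite k).Adj y z) (hzw : (completeTripartite k).Adj z w)
    (hwy : w ≠ y) (hxz : x ≠ z) :
    Xor' (ConvexCross σ s(w, x) s(y, z)) (ConvexCross σ s(x, y) s(z, w)) := by
  have hn : 0 < Fintype.card (Fin 3 × Fin k) := by
    simp only [Fintype.card_prod, Fintype.card_fin]; omega
  haveI : NeZero (Fintype.card (Fin 3 × Fin k)) := ⟨hn.ne'⟩
  rw [completeTripartite, SimpleGraph.fromRel_adj] at hwx hxy hyz hzw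
  have cwx : w.1 ≠ x.1 := hwx.2.elim id Ne.symm
  have cxy : x.1 ≠ y.1 := hxy.2.elim id Ne.symm
  have cyz : y.1 ≠ z.1 := hyz.2.elim id Ne.symm
  have czw : z.1 ≠ w.1 := hzw.2.elim id Ne.symm
  have swx : σ w ≠ σ x := hσ.ne hwx.1
  have sxy : σ x ≠ σ y := hσ.ne hxy.1
  have syz : σ y ≠ σ z := hσ.ne hyz.1
  have szw : σ z ≠ σ w := hσ.ne hzw.1
  have swy : σ w ≠ σ y := hσ.ne hwy
  have sxz : σ x ≠ σ z := hσ.ne hxz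
  -- the two crossing statements in canonical form
  rw [convexCross_iff σ w x y z swx swy (Ne.symm szw) sxy sxz syz,
      convexCross_iff σ x y z w sxy sxz (Ne.symm swx) syz (Ne.symm swy) szw]
  -- class case split
  have hcase : w.1 = y.1 ∨ x.1 = z.1 := by
    by_contra hcon
    push_neg at hcon
    have e1 : (w.1 : ℕ) ≠ x.1 := fun h => cwx (Fin.val_injective h)
    have e2 : (x.1 : ℕ) ≠ y.1 := fun h => cxy (Fin.val_injective h)
    have e3 : (y.1 : ℕ) ≠ z.1 := fun h => cyz (Fin.val_injective h)
    have e4 : (z.1 : ℕ) ≠ w.1 := fun h => czw (Fin.val_injective h)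
    have e5 : (w.1 : ℕ) ≠ y.1 := fun h => hcon.1 (Fin.val_injective h)
    have e6 : (x.1 : ℕ) ≠ z.1 := fun h => hcon.2 (Fin.val_injective h)
    have := w.1.isLt; have := x.1.isLt; have := y.1.isLt; have := z.1.isLt
    omega
  have notmem : ∀ (i : Fin 3) (v : Fin 3 × Fin k), v.1 ≠ i →
      σ v ∉ σ '' {u : Fin 3 × Fin k | u.1 = i} := by
    rintro i v hv ⟨u, hu, hueq⟩
    exact hv ((hσ hueq) ▸ hu)
  obtain ⟨b1, b2, b3⟩ := val_sub_char (σ x) (σ w) (Ne.symm swx)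
  obtain ⟨c1, c2, c3⟩ := val_sub_char (σ y) (σ w) (Ne.symm swy)
  obtain ⟨d1, d2, d3⟩ := val_sub_char (σ z) (σ w) szw
  obtain ⟨f1, f2, f3⟩ := val_sub_char (σ y) (σ x) (Ne.symm sxy)
  obtain ⟨g1, g2, g3⟩ := val_sub_char (σ z) (σ x) (Ne.symm sxz)
  obtain ⟨i1, i2, i3⟩ := val_sub_char (σ w) (σ x) swx
  obtain ⟨j1, j2, j3⟩ := val_sub_char (σ z) (σ y) (Ne.symm syz)
  rcases hcase with hc | hc
  · have H : InArc (σ w) (σ y) (σ x) ↔ InArc (σ w) (σ y) (σ z) :=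
      interval_side (hint w.1) ⟨w, rfl, rfl⟩ ⟨y, hc.symm, rfl⟩
        (notmem w.1 x (Ne.symm cwx)) (notmem w.1 z czw)
        swy (Ne.symm swx) szw
    simp only [InArc] at H
    simp only [InArc]
    exact final_nat1 _ _ _ _ _ _ _ _ _ _ _ _ (ZMod.val_lt _) (ZMod.val_lt _)
      (ZMod.val_lt _) (ZMod.val_lt _) b1 b2 b3 c1 c2 c3 d1 d2 d3 f1 f2 f3 g1 g2 g3 i1 i2 i3 j1 j2 j3 H
  · have H : InArc (σ x) (σ z) (σ w) ↔ InArc (σ x) (σ z) (σ y) :=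
      interval_side (hint x.1) ⟨x, rfl, rfl⟩ ⟨z, hc.symm, rfl⟩
        (notmem x.1 w cwx) (notmem x.1 y (Ne.symm cxy))
        sxz swx (Ne.symm sxy)
    simp only [InArc] at H
    simp only [InArc]
    exact final_nat2 _ _ _ _ _ _ _ _ _ _ _ _ (ZMod.val_lt _) (ZMod.val_lt _)
      (ZMod.val_lt _) (ZMod.val_lt _) b1 b2 b3 c1 c2 c3 d1 d2 d3 f1 f2 f3 g1 g2 g3 i1 i2 i3 j1 j2 j3 H
end

section
/- In every convex drawing σ of the graph H, every cycle edge e of H avoids at least one other edge of H; that is, there exists an edge f of H with e ∩ f = ∅ such that e and f do not cross in σ. -/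
/-- The graph `H`: a 9-cycle on the vertices `0, …, 8` (representing `v₀, …, v₈`)
together with a central vertex `9` (representing `z`) adjacent to `0`, `3` and `6`. -/
def graphH : SimpleGraph (Fin 10) :=
  SimpleGraph.fromEdgeSet
    {s((0 : Fin 10), 1), s((1 : Fin 10), 2), s((2 : Fin 10), 3), s((3 : Fin 10), 4),
     s((4 : Fin 10), 5), s((5 : Fin 10), 6), s((6 : Fin 10), 7), s((7 : Fin 10), 8),
     s((8 : Fin 10), 0), s((9 : Fin 10), 0), s((9 : Fin 10), 3), s((9 : Fin 10), 6)}

/-- The nine cycle edges of `H`. -/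
def cycleEdgesH : Set (Sym2 (Fin 10)) :=
  {s((0 : Fin 10), 1), s((1 : Fin 10), 2), s((2 : Fin 10), 3), s((3 : Fin 10), 4),
   s((4 : Fin 10), 5), s((5 : Fin 10), 6), s((6 : Fin 10), 7), s((7 : Fin 10), 8),
   s((8 : Fin 10), 0)}

instance {n : ℕ} (x y z : ZMod n) : Decidable (InArc x y z) := by
  unfold InArc; infer_instance

set_option synthInstance.maxSize 2000 in
lemma xor_swap : ∀ x y z w : ZMod 10, x ≠ y → z ≠ x → z ≠ y → w ≠ x → w ≠ y →
    (Xor' (InArc y x z) (InArc y x w) → Xor' (InArc x y z) (InArc x y w)) := by unfold Xor'; decide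

lemma xor_comm' (p q : Prop) (h : Xor' p q) : Xor' q p := by unfold Xor' Xor at *; tauto

lemma xor_cycle (p q r s t : Prop) (h1 : Xor' p q) (h2 : Xor' q r) (h3 : Xor' r s)
    (h4 : Xor' s t) (h5 : Xor' p t) : False := by unfold Xor' Xor at *; tauto

lemma cross_xor (σ : Fin 10 → ZMod (Fintype.card (Fin 10))) (hσ : Function.Injective σ)
    (a b c d : Fin 10) (hab : a ≠ b)
    (h : ConvexCross σ s(a, b) s(c, d)) :
    Xor' (InArc (σ a) (σ b) (σ c)) (InArc (σ a) (σ b) (σ d)) := by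
  obtain ⟨hind, a', b', c', d', he, hf, hx⟩ := h
  have hA : a ∉ s(c, d) := hind a (Sym2.mem_mk_left a b)
  have hB : b ∉ s(c, d) := hind b (Sym2.mem_mk_right a b)
  rw [Sym2.mem_iff, not_or] at hA hB
  have hac : σ a ≠ σ c := fun h => hA.1 (hσ h)
  have had : σ a ≠ σ d := fun h => hA.2 (hσ h)
  have hbc : σ b ≠ σ c := fun h => hB.1 (hσ h)
  have hbd : σ b ≠ σ d := fun h => hB.2 (hσ h)
  have hab' : σ a ≠ σ b := fun h => hab (hσ h)
  have key : ∀ z w : ZMod (Fintype.card (Fin 10)), z ≠ σ a → z ≠ σ b → w ≠ σ a → w ≠ σ b →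
      Xor' (InArc (σ b) (σ a) z) (InArc (σ b) (σ a) w) →
      Xor' (InArc (σ a) (σ b) z) (InArc (σ a) (σ b) w) :=
    fun z w h1 h2 h3 h4 h5 => xor_swap (σ a) (σ b) z w hab' h1 h2 h3 h4 h5
  rw [Sym2.eq_iff] at he hf
  rcases he with ⟨rfl, rfl⟩ | ⟨rfl, rfl⟩ <;> rcases hf with ⟨rfl, rfl⟩ | ⟨rfl, rfl⟩
  · exact hx
  · exact xor_comm' _ _ hx
  · exact key _ _ hac.symm hbc.symm had.symm hbd.symm hx
  · exact key _ _ hac.symm hbc.symm had.symm hbd.symm (xor_comm' _ _ hx)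

lemma memH (a b : Fin 10) (hne : a ≠ b)
    (h : s(a, b) = s((0 : Fin 10), 1) ∨ s(a, b) = s((1 : Fin 10), 2) ∨
      s(a, b) = s((2 : Fin 10), 3) ∨ s(a, b) = s((3 : Fin 10), 4) ∨
      s(a, b) = s((4 : Fin 10), 5) ∨ s(a, b) = s((5 : Fin 10), 6) ∨
      s(a, b) = s((6 : Fin 10), 7) ∨ s(a, b) = s((7 : Fin 10), 8) ∨
      s(a, b) = s((8 : Fin 10), 0) ∨ s(a, b) = s((9 : Fin 10), 0) ∨
      s(a, b) = s((9 : Fin 10), 3) ∨ s(a, b) = s((9 : Fin 10), 6)) :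
    s(a, b) ∈ graphH.edgeSet := by
  rw [SimpleGraph.mem_edgeSet, graphH, SimpleGraph.fromEdgeSet_adj]
  exact ⟨by simpa only [Set.mem_insert_iff, Set.mem_singleton_iff] using h, hne⟩

/-- In any convex drawing of `H`, any cycle edge avoids (is independent from and does not
cross) at least one other edge of `H`. -/
theorem cycle_edge_avoids_some_edge
    (σ : Fin 10 → ZMod (Fintype.card (Fin 10))) (hσ : Function.Injective σ)
    (e : Sym2 (Fin 10)) (he : e ∈ cycleEdgesH) :
    ∃ f ∈ graphH.edgeSet, Sym2Indep e f ∧ ¬ ConvexCross σ e f := by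
  by_contra hcon
  push_neg at hcon
  simp only [cycleEdgesH, Set.mem_insert_iff, Set.mem_singleton_iff] at he
  rcases he with rfl | rfl | rfl | rfl | rfl | rfl | rfl | rfl | rfl
  · -- e = s(0, 1)
    have x0 := cross_xor σ hσ 0 1 9 3 (by decide)
      (hcon s((9 : Fin 10), 3) (memH 9 3 (by decide) (by decide))
        (by unfold Sym2Indep; decide))
    have x1 := cross_xor σ hσ 0 1 3 4 (by decide)
      (hcon s((3 : Fin 10), 4) (memH 3 4 (by decide) (by decide))
        (by unfold Sym2Indep; decide))
    have x2 := cross_xor σ hσ 0 1 4 5 (by decide)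
      (hcon s((4 : Fin 10), 5) (memH 4 5 (by decide) (by decide))
        (by unfold Sym2Indep; decide))
    have x3 := cross_xor σ hσ 0 1 5 6 (by decide)
      (hcon s((5 : Fin 10), 6) (memH 5 6 (by decide) (by decide))
        (by unfold Sym2Indep; decide))
    have x4 := cross_xor σ hσ 0 1 9 6 (by decide)
      (hcon s((9 : Fin 10), 6) (memH 9 6 (by decide) (by decide))
        (by unfold Sym2Indep; decide))
    exact xor_cycle _ _ _ _ _ x0 x1 x2 x3 x4
  · -- e = s(1, 2)
    have x0 := cross_xor σ hσ 1 2 9 3 (by decide)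
      (hcon s((9 : Fin 10), 3) (memH 9 3 (by decide) (by decide))
        (by unfold Sym2Indep; decide))
    have x1 := cross_xor σ hσ 1 2 3 4 (by decide)
      (hcon s((3 : Fin 10), 4) (memH 3 4 (by decide) (by decide))
        (by unfold Sym2Indep; decide))
    have x2 := cross_xor σ hσ 1 2 4 5 (by decide)
      (hcon s((4 : Fin 10), 5) (memH 4 5 (by decide) (by decide))
        (by unfold Sym2Indep; decide))
    have x3 := cross_xor σ hσ 1 2 5 6 (by decide)
      (hcon s((5 : Fin 10), 6) (memH 5 6 (by decide) (by decide))
        (by unfold Sym2Indep; decide))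
    have x4 := cross_xor σ hσ 1 2 9 6 (by decide)
      (hcon s((9 : Fin 10), 6) (memH 9 6 (by decide) (by decide))
        (by unfold Sym2Indep; decide))
    exact xor_cycle _ _ _ _ _ x0 x1 x2 x3 x4
  · -- e = s(2, 3)
    have x0 := cross_xor σ hσ 2 3 9 6 (by decide)
      (hcon s((9 : Fin 10), 6) (memH 9 6 (by decide) (by decide))
        (by unfold Sym2Indep; decide))
    have x1 := cross_xor σ hσ 2 3 6 7 (by decide)
      (hcon s((6 : Fin 10), 7) (memH 6 7 (by decide) (by decide))
        (by unfold Sym2Indep; decide))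
    have x2 := cross_xor σ hσ 2 3 7 8 (by decide)
      (hcon s((7 : Fin 10), 8) (memH 7 8 (by decide) (by decide))
        (by unfold Sym2Indep; decide))
    have x3 := cross_xor σ hσ 2 3 8 0 (by decide)
      (hcon s((8 : Fin 10), 0) (memH 8 0 (by decide) (by decide))
        (by unfold Sym2Indep; decide))
    have x4 := cross_xor σ hσ 2 3 9 0 (by decide)
      (hcon s((9 : Fin 10), 0) (memH 9 0 (by decide) (by decide))
        (by unfold Sym2Indep; decide))
    exact xor_cycle _ _ _ _ _ x0 x1 x2 x3 x4
  · -- e = s(3, 4)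
    have x0 := cross_xor σ hσ 3 4 9 6 (by decide)
      (hcon s((9 : Fin 10), 6) (memH 9 6 (by decide) (by decide))
        (by unfold Sym2Indep; decide))
    have x1 := cross_xor σ hσ 3 4 6 7 (by decide)
      (hcon s((6 : Fin 10), 7) (memH 6 7 (by decide) (by decide))
        (by unfold Sym2Indep; decide))
    have x2 := cross_xor σ hσ 3 4 7 8 (by decide)
      (hcon s((7 : Fin 10), 8) (memH 7 8 (by decide) (by decide))
        (by unfold Sym2Indep; decide))
    have x3 := cross_xor σ hσ 3 4 8 0 (by decide)
      (hcon s((8 : Fin 10), 0) (memH 8 0 (by decide) (by decide))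
        (by unfold Sym2Indep; decide))
    have x4 := cross_xor σ hσ 3 4 9 0 (by decide)
      (hcon s((9 : Fin 10), 0) (memH 9 0 (by decide) (by decide))
        (by unfold Sym2Indep; decide))
    exact xor_cycle _ _ _ _ _ x0 x1 x2 x3 x4
  · -- e = s(4, 5)
    have x0 := cross_xor σ hσ 4 5 9 6 (by decide)
      (hcon s((9 : Fin 10), 6) (memH 9 6 (by decide) (by decide))
        (by unfold Sym2Indep; decide))
    have x1 := cross_xor σ hσ 4 5 6 7 (by decide)
      (hcon s((6 : Fin 10), 7) (memH 6 7 (by decide) (by decide))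
        (by unfold Sym2Indep; decide))
    have x2 := cross_xor σ hσ 4 5 7 8 (by decide)
      (hcon s((7 : Fin 10), 8) (memH 7 8 (by decide) (by decide))
        (by unfold Sym2Indep; decide))
    have x3 := cross_xor σ hσ 4 5 8 0 (by decide)
      (hcon s((8 : Fin 10), 0) (memH 8 0 (by decide) (by decide))
        (by unfold Sym2Indep; decide))
    have x4 := cross_xor σ hσ 4 5 9 0 (by decide)
      (hcon s((9 : Fin 10), 0) (memH 9 0 (by decide) (by decide))
        (by unfold Sym2Indep; decide))
    exact xor_cycle _ _ _ _ _ x0 x1 x2 x3 x4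
  · -- e = s(5, 6)
    have x0 := cross_xor σ hσ 5 6 9 0 (by decide)
      (hcon s((9 : Fin 10), 0) (memH 9 0 (by decide) (by decide))
        (by unfold Sym2Indep; decide))
    have x1 := cross_xor σ hσ 5 6 0 1 (by decide)
      (hcon s((0 : Fin 10), 1) (memH 0 1 (by decide) (by decide))
        (by unfold Sym2Indep; decide))
    have x2 := cross_xor σ hσ 5 6 1 2 (by decide)
      (hcon s((1 : Fin 10), 2) (memH 1 2 (by decide) (by decide))
        (by unfold Sym2Indep; decide))
    have x3 := cross_xor σ hσ 5 6 2 3 (by decide)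
      (hcon s((2 : Fin 10), 3) (memH 2 3 (by decide) (by decide))
        (by unfold Sym2Indep; decide))
    have x4 := cross_xor σ hσ 5 6 9 3 (by decide)
      (hcon s((9 : Fin 10), 3) (memH 9 3 (by decide) (by decide))
        (by unfold Sym2Indep; decide))
    exact xor_cycle _ _ _ _ _ x0 x1 x2 x3 x4
  · -- e = s(6, 7)
    have x0 := cross_xor σ hσ 6 7 9 0 (by decide)
      (hcon s((9 : Fin 10), 0) (memH 9 0 (by decide) (by decide))
        (by unfold Sym2Indep; decide))
    have x1 := cross_xor σ hσ 6 7 0 1 (by decide)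
      (hcon s((0 : Fin 10), 1) (memH 0 1 (by decide) (by decide))
        (by unfold Sym2Indep; decide))
    have x2 := cross_xor σ hσ 6 7 1 2 (by decide)
      (hcon s((1 : Fin 10), 2) (memH 1 2 (by decide) (by decide))
        (by unfold Sym2Indep; decide))
    have x3 := cross_xor σ hσ 6 7 2 3 (by decide)
      (hcon s((2 : Fin 10), 3) (memH 2 3 (by decide) (by decide))
        (by unfold Sym2Indep; decide))
    have x4 := cross_xor σ hσ 6 7 9 3 (by decide)
      (hcon s((9 : Fin 10), 3) (memH 9 3 (by decide) (by decide))
        (by unfold Sym2Indep; decide))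
    exact xor_cycle _ _ _ _ _ x0 x1 x2 x3 x4
  · -- e = s(7, 8)
    have x0 := cross_xor σ hσ 7 8 9 3 (by decide)
      (hcon s((9 : Fin 10), 3) (memH 9 3 (by decide) (by decide))
        (by unfold Sym2Indep; decide))
    have x1 := cross_xor σ hσ 7 8 3 4 (by decide)
      (hcon s((3 : Fin 10), 4) (memH 3 4 (by decide) (by decide))
        (by unfold Sym2Indep; decide))
    have x2 := cross_xor σ hσ 7 8 4 5 (by decide)
      (hcon s((4 : Fin 10), 5) (memH 4 5 (by decide) (by decide))
        (by unfold Sym2Indep; decide))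
    have x3 := cross_xor σ hσ 7 8 5 6 (by decide)
      (hcon s((5 : Fin 10), 6) (memH 5 6 (by decide) (by decide))
        (by unfold Sym2Indep; decide))
    have x4 := cross_xor σ hσ 7 8 9 6 (by decide)
      (hcon s((9 : Fin 10), 6) (memH 9 6 (by decide) (by decide))
        (by unfold Sym2Indep; decide))
    exact xor_cycle _ _ _ _ _ x0 x1 x2 x3 x4
  · -- e = s(8, 0)
    have x0 := cross_xor σ hσ 8 0 9 3 (by decide)
      (hcon s((9 : Fin 10), 3) (memH 9 3 (by decide) (by decide))
        (by unfold Sym2Indep; decide))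
    have x1 := cross_xor σ hσ 8 0 3 4 (by decide)
      (hcon s((3 : Fin 10), 4) (memH 3 4 (by decide) (by decide))
        (by unfold Sym2Indep; decide))
    have x2 := cross_xor σ hσ 8 0 4 5 (by decide)
      (hcon s((4 : Fin 10), 5) (memH 4 5 (by decide) (by decide))
        (by unfold Sym2Indep; decide))
    have x3 := cross_xor σ hσ 8 0 5 6 (by decide)
      (hcon s((5 : Fin 10), 6) (memH 5 6 (by decide) (by decide))
        (by unfold Sym2Indep; decide))
    have x4 := cross_xor σ hσ 8 0 9 6 (by decide)
      (hcon s((9 : Fin 10), 6) (memH 9 6 (by decide) (by decide))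
        (by unfold Sym2Indep; decide))
    exact xor_cycle _ _ _ _ _ x0 x1 x2 x3 x4
end

section
/- Let σ be a convex drawing of the graph H and let e be a cycle edge of H whose span s (with respect to the induced cyclic order of the nine cycle vertices v₀, …, v₈) satisfies s ∈ {0, 1, 2}. Then e avoids at least 6 − 2s cycle edges of H in σ. -/
/-- The number of cycle vertices of `H` (the vertices `0,…,8`) other than `a` and `b` lying
on the open cyclic arc from `σ a` to `σ b`. -/
noncomputable def arcVertexCount (σ : Fin 10 → ZMod (Fintype.card (Fin 10)))
    (a b : Fin 10) : ℕ :=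
  {u : Fin 10 | u.val < 9 ∧ u ≠ a ∧ u ≠ b ∧ InArc (σ a) (σ b) (σ u)}.ncard

instance {V : Type*} [DecidableEq V] [Fintype V] (e f : Sym2 V) : Decidable (Sym2Indep e f) := by
  unfold Sym2Indep; infer_instance

instance : DecidablePred (· ∈ cycleEdgesH) := fun f =>
  decidable_of_iff (f = s((0 : Fin 10), 1) ∨ f = s((1 : Fin 10), 2) ∨ f = s((2 : Fin 10), 3) ∨
    f = s((3 : Fin 10), 4) ∨ f = s((4 : Fin 10), 5) ∨ f = s((5 : Fin 10), 6) ∨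
    f = s((6 : Fin 10), 7) ∨ f = s((7 : Fin 10), 8) ∨ f = s((8 : Fin 10), 0))
    (by simp [cycleEdgesH])

set_option maxRecDepth 10000 in
lemma arc_compl : ∀ x y z : ZMod 10, x ≠ y → z ≠ x → z ≠ y →
    (InArc y x z ↔ ¬ InArc x y z) := by decide

set_option maxRecDepth 10000 in
lemma boolLemma : ∀ v : Fin 7 → Bool,
    6 - 2 * min ((Finset.univ.filter (fun j => v j = true)).card)
      (7 - (Finset.univ.filter (fun j => v j = true)).card) ≤
    (Finset.univ.filter (fun j : Fin 6 => v j.castSucc = v j.succ)).card := by decide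

lemma cross_iff (σ : Fin 10 → ZMod (Fintype.card (Fin 10))) (hσ : Function.Injective σ)
    (a b c d : Fin 10) (hab : a ≠ b) (hca : c ≠ a) (hcb : c ≠ b)
    (hda : d ≠ a) (hdb : d ≠ b) :
    ConvexCross σ s(a, b) s(c, d) ↔
      Xor' (InArc (σ a) (σ b) (σ c)) (InArc (σ a) (σ b) (σ d)) := by
  have flip : ∀ z : Fin 10, z ≠ a → z ≠ b →
      (InArc (σ b) (σ a) (σ z) ↔ ¬ InArc (σ a) (σ b) (σ z)) := fun z hza hzb =>
    arc_compl (σ a) (σ b) (σ z) (fun h => hab (hσ h)) (fun h => hza (hσ h)) (fun h => hzb (hσ h))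
  constructor
  · rintro ⟨-, a', b', c', d', he, hf, hx⟩
    rw [Sym2.eq_iff] at he hf
    rcases he with ⟨rfl, rfl⟩ | ⟨rfl, rfl⟩ <;>
      rcases hf with ⟨rfl, rfl⟩ | ⟨rfl, rfl⟩
    · exact hx
    · exact hx.symm
    · rw [flip c hca hcb, flip d hda hdb] at hx
      unfold Xor' at hx ⊢; unfold Xor at hx ⊢; tauto
    · rw [flip c hca hcb, flip d hda hdb] at hx
      unfold Xor' at hx ⊢; unfold Xor at hx ⊢; tauto
  · intro hx
    refine ⟨?_, a, b, c, d, rfl, rfl, hx⟩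
    intro x h1 h2
    rw [Sym2.mem_iff] at h1 h2
    rcases h1 with rfl | rfl <;> rcases h2 with h | h
    · exact hca h.symm
    · exact hda h.symm
    · exact hcb h.symm
    · exact hdb h.symm

lemma key (σ : Fin 10 → ZMod (Fintype.card (Fin 10))) (hσ : Function.Injective σ)
    (a b : Fin 10) (w : Fin 7 → Fin 10)
    (hmem : ∀ j : Fin 6, s(w j.castSucc, w j.succ) ∈ cycleEdgesH)
    (hind : ∀ j : Fin 6, Sym2Indep s(a, b) s(w j.castSucc, w j.succ))
    (hwv : ∀ j, (w j).val < 9)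
    (hwa : ∀ j, w j ≠ a) (hwb : ∀ j, w j ≠ b)
    (hwinj : Function.Injective w)
    (hab : a ≠ b)
    (hcover : ∀ u : Fin 10, u.val < 9 → u ≠ a → u ≠ b → ∃ j, w j = u) :
    6 - 2 * min (arcVertexCount σ a b) (arcVertexCount σ b a) ≤
      {f ∈ cycleEdgesH | Sym2Indep s(a, b) f ∧ ¬ ConvexCross σ s(a, b) f}.ncard := by
  classical
  set v : Fin 7 → Bool := fun j => decide (InArc (σ a) (σ b) (σ (w j))) with hv
  have flip : ∀ j : Fin 7,
      (InArc (σ b) (σ a) (σ (w j)) ↔ ¬ InArc (σ a) (σ b) (σ (w j))) := fun j =>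
    arc_compl (σ a) (σ b) (σ (w j)) (fun h => hab (hσ h)) (fun h => hwa j (hσ h))
      (fun h => hwb j (hσ h))
  -- arcVertexCount σ a b = number of `true`s
  have hA : arcVertexCount σ a b = (Finset.univ.filter (fun j => v j = true)).card := by
    have hset : {u : Fin 10 | u.val < 9 ∧ u ≠ a ∧ u ≠ b ∧ InArc (σ a) (σ b) (σ u)} =
        ↑((Finset.univ.filter (fun j => v j = true)).image w) := by
      ext u
      simp only [Set.mem_setOf_eq, Finset.coe_image, Set.mem_image, Finset.mem_coe,
        Finset.mem_filter, Finset.mem_univ, true_and]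
      constructor
      · rintro ⟨h9, ha, hb, hin⟩
        obtain ⟨j, rfl⟩ := hcover u h9 ha hb
        exact ⟨j, by simpa [hv] using hin, rfl⟩
      · rintro ⟨j, hj, rfl⟩
        exact ⟨hwv j, hwa j, hwb j, by simpa [hv] using hj⟩
    rw [arcVertexCount, hset, Set.ncard_coe_finset, Finset.card_image_of_injective _ hwinj]
  have hB : arcVertexCount σ b a = (Finset.univ.filter (fun j => v j = false)).card := by
    have hset : {u : Fin 10 | u.val < 9 ∧ u ≠ b ∧ u ≠ a ∧ InArc (σ b) (σ a) (σ u)} =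
        ↑((Finset.univ.filter (fun j => v j = false)).image w) := by
      ext u
      simp only [Set.mem_setOf_eq, Finset.coe_image, Set.mem_image, Finset.mem_coe,
        Finset.mem_filter, Finset.mem_univ, true_and]
      constructor
      · rintro ⟨h9, hb', ha', hin⟩
        obtain ⟨j, rfl⟩ := hcover u h9 ha' hb'
        refine ⟨j, ?_, rfl⟩
        have := (flip j).mp hin
        simpa [hv] using this
      · rintro ⟨j, hj, rfl⟩
        refine ⟨hwv j, hwb j, hwa j, (flip j).mpr ?_⟩
        simpa [hv] using hj
    rw [arcVertexCount, hset, Set.ncard_coe_finset, Finset.card_image_of_injective _ hwinj]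
  have hBval : (Finset.univ.filter (fun j => v j = false)).card =
      7 - (Finset.univ.filter (fun j => v j = true)).card := by
    have h1 : (Finset.univ.filter (fun j => v j = true)).card +
        (Finset.univ.filter (fun j => ¬ (v j = true))).card = Finset.univ.card :=
      Finset.card_filter_add_card_filter_not _
    have h2 : (Finset.univ.filter (fun j => ¬ (v j = true))).card =
        (Finset.univ.filter (fun j => v j = false)).card := by
      congr 1
      apply Finset.filter_congr
      intro j _
      simp
    simp only [Finset.card_univ, Fintype.card_fin] at h1
    omega
  -- the edge map
  set E : Fin 6 → Sym2 (Fin 10) := fun j => s(w j.castSucc, w j.succ) with hE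
  have hEinj : Function.Injective E := by
    intro j k h
    rw [hE, Sym2.eq_iff] at h
    rcases h with ⟨h1, _⟩ | ⟨h1, h2⟩
    · have := hwinj h1
      exact Fin.castSucc_injective _ this
    · have e1 := congrArg Fin.val (hwinj h1)
      have e2 := congrArg Fin.val (hwinj h2)
      simp only [Fin.coe_castSucc, Fin.val_succ] at e1 e2
      omega
  have hsub : ↑((Finset.univ.filter (fun j : Fin 6 => v j.castSucc = v j.succ)).image E) ⊆
      {f ∈ cycleEdgesH | Sym2Indep s(a, b) f ∧ ¬ ConvexCross σ s(a, b) f} := by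
    intro f hf
    simp only [Finset.coe_image, Set.mem_image, Finset.mem_coe, Finset.mem_filter,
      Finset.mem_univ, true_and] at hf
    obtain ⟨j, hj, rfl⟩ := hf
    refine ⟨hmem j, hind j, ?_⟩
    intro hcross
    have hcd : w j.castSucc ≠ w j.succ := by
      intro h
      have := congrArg Fin.val (hwinj h)
      simp only [Fin.coe_castSucc, Fin.val_succ] at this
      omega
    have hx := (cross_iff σ hσ a b (w j.castSucc) (w j.succ) hab (hwa _) (hwb _)
      (hwa _) (hwb _)).mp hcross
    rcases hx with ⟨hp, hq⟩ | ⟨hq, hp⟩ <;> simp [hv, hp, hq] at hj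
  have hfin : ({f ∈ cycleEdgesH | Sym2Indep s(a, b) f ∧ ¬ ConvexCross σ s(a, b) f} :
      Set (Sym2 (Fin 10))).Finite := Set.toFinite _
  have hcard : (Finset.univ.filter (fun j : Fin 6 => v j.castSucc = v j.succ)).card ≤
      {f ∈ cycleEdgesH | Sym2Indep s(a, b) f ∧ ¬ ConvexCross σ s(a, b) f}.ncard := by
    calc (Finset.univ.filter (fun j : Fin 6 => v j.castSucc = v j.succ)).card
        = ((Finset.univ.filter (fun j : Fin 6 => v j.castSucc = v j.succ)).image E).card :=
          (Finset.card_image_of_injective _ hEinj).symm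
      _ = (↑((Finset.univ.filter (fun j : Fin 6 => v j.castSucc = v j.succ)).image E) :
            Set (Sym2 (Fin 10))).ncard := (Set.ncard_coe_finset _).symm
      _ ≤ _ := Set.ncard_le_ncard hsub hfin
  calc 6 - 2 * min (arcVertexCount σ a b) (arcVertexCount σ b a)
      = 6 - 2 * min ((Finset.univ.filter (fun j => v j = true)).card)
          (7 - (Finset.univ.filter (fun j => v j = true)).card) := by rw [hA, hB, hBval]
    _ ≤ (Finset.univ.filter (fun j : Fin 6 => v j.castSucc = v j.succ)).card := boolLemma v
    _ ≤ _ := hcard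

/-- In any convex drawing of `H`, a cycle edge of span `s ≤ 2` avoids at least `6 - 2s`
cycle edges. -/
theorem cycle_edge_span_avoidances
    (σ : Fin 10 → ZMod (Fintype.card (Fin 10))) (hσ : Function.Injective σ)
    (a b : Fin 10) (he : s(a, b) ∈ cycleEdgesH) (s : ℕ)
    (hs : s = min (arcVertexCount σ a b) (arcVertexCount σ b a)) (hs2 : s ≤ 2) :
    6 - 2 * s ≤
      {f ∈ cycleEdgesH | Sym2Indep s(a, b) f ∧ ¬ ConvexCross σ s(a, b) f}.ncard := by
  subst hs
  simp only [cycleEdgesH, Set.mem_insert_iff, Set.mem_singleton_iff] at he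
  rcases he with h | h | h | h | h | h | h | h | h <;>
    rw [Sym2.eq_iff] at h <;>
    rcases h with ⟨rfl, rfl⟩ | ⟨rfl, rfl⟩
  · exact key σ hσ _ _ ![2,3,4,5,6,7,8] (by decide) (by decide) (by decide) (by decide)
      (by decide) (by decide) (by decide) (by decide)
  · exact key σ hσ _ _ ![2,3,4,5,6,7,8] (by decide) (by decide) (by decide) (by decide)
      (by decide) (by decide) (by decide) (by decide)
  · exact key σ hσ _ _ ![3,4,5,6,7,8,0] (by decide) (by decide) (by decide) (by decide)
      (by decide) (by decide) (by decide) (by decide)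
  · exact key σ hσ _ _ ![3,4,5,6,7,8,0] (by decide) (by decide) (by decide) (by decide)
      (by decide) (by decide) (by decide) (by decide)
  · exact key σ hσ _ _ ![4,5,6,7,8,0,1] (by decide) (by decide) (by decide) (by decide)
      (by decide) (by decide) (by decide) (by decide)
  · exact key σ hσ _ _ ![4,5,6,7,8,0,1] (by decide) (by decide) (by decide) (by decide)
      (by decide) (by decide) (by decide) (by decide)
  · exact key σ hσ _ _ ![5,6,7,8,0,1,2] (by decide) (by decide) (by decide) (by decide)
      (by decide) (by decide) (by decide) (by decide)
  · exact key σ hσ _ _ ![5,6,7,8,0,1,2] (by decide) (by decide) (by decide) (by decide)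
      (by decide) (by decide) (by decide) (by decide)
  · exact key σ hσ _ _ ![6,7,8,0,1,2,3] (by decide) (by decide) (by decide) (by decide)
      (by decide) (by decide) (by decide) (by decide)
  · exact key σ hσ _ _ ![6,7,8,0,1,2,3] (by decide) (by decide) (by decide) (by decide)
      (by decide) (by decide) (by decide) (by decide)
  · exact key σ hσ _ _ ![7,8,0,1,2,3,4] (by decide) (by decide) (by decide) (by decide)
      (by decide) (by decide) (by decide) (by decide)
  · exact key σ hσ _ _ ![7,8,0,1,2,3,4] (by decide) (by decide) (by decide) (by decide)
      (by decide) (by decide) (by decide) (by decide)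
  · exact key σ hσ _ _ ![8,0,1,2,3,4,5] (by decide) (by decide) (by decide) (by decide)
      (by decide) (by decide) (by decide) (by decide)
  · exact key σ hσ _ _ ![8,0,1,2,3,4,5] (by decide) (by decide) (by decide) (by decide)
      (by decide) (by decide) (by decide) (by decide)
  · exact key σ hσ _ _ ![0,1,2,3,4,5,6] (by decide) (by decide) (by decide) (by decide)
      (by decide) (by decide) (by decide) (by decide)
  · exact key σ hσ _ _ ![0,1,2,3,4,5,6] (by decide) (by decide) (by decide) (by decide)
      (by decide) (by decide) (by decide) (by decide)
  · exact key σ hσ _ _ ![1,2,3,4,5,6,7] (by decide) (by decide) (by decide) (by decide)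
      (by decide) (by decide) (by decide) (by decide)
  · exact key σ hσ _ _ ![1,2,3,4,5,6,7] (by decide) (by decide) (by decide) (by decide)
      (by decide) (by decide) (by decide) (by decide)
end

section
/- For every cyclic arrangement of the vertices v₀, …, v₈ of the 9-cycle C₉ (an injective map of the nine vertices into ZMod 9), the number of cycle edges of span at most 2 is never exactly one; equivalently, if eight of the nine cycle edges have span 3, then the ninth cycle edge also has span 3. -/
/-- The span of the cycle edge `v_i v_{i+1}` of `C₉` in the cyclic arrangement `σ`:
the edge splits the remaining seven vertices into two cyclic arcs, and the span is the
number of vertices in the smaller arc. -/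
noncomputable def spanC9 (σ : Fin 9 → ZMod 9) (i : Fin 9) : ℕ :=
  min {j : Fin 9 | j ≠ i ∧ j ≠ i + 1 ∧ InArc (σ i) (σ (i + 1)) (σ j)}.ncard
      {j : Fin 9 | j ≠ i ∧ j ≠ i + 1 ∧ InArc (σ (i + 1)) (σ i) (σ j)}.ncard

lemma arc_ncard (x y : ZMod 9) :
    {z : ZMod 9 | InArc x y z}.ncard = (y - x).val - 1 := by
  rw [Set.ncard_eq_toFinset_card']
  have : ∀ x y : ZMod 9,
      (Set.toFinset {z : ZMod 9 | InArc x y z}).card = (y - x).val - 1 := by decide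
  exact this x y

lemma edge_set_eq (σ : Fin 9 → ZMod 9) (hσ : Function.Injective σ) (i i' : Fin 9) :
    {j : Fin 9 | j ≠ i ∧ j ≠ i' ∧ InArc (σ i) (σ i') (σ j)}
      = σ ⁻¹' {z : ZMod 9 | InArc (σ i) (σ i') z} := by
  ext j
  simp only [Set.mem_setOf_eq, Set.mem_preimage]
  constructor
  · rintro ⟨-, -, h⟩; exact h
  · intro h
    refine ⟨?_, ?_, h⟩
    · rintro rfl
      simp [InArc] at h
    · rintro rfl
      obtain ⟨h1, h2⟩ := h
      omega

lemma preimage_ncard (σ : Fin 9 → ZMod 9) (hσ : Function.Injective σ)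
    (S : Set (ZMod 9)) : (σ ⁻¹' S).ncard = S.ncard := by
  have hbij : Function.Bijective σ :=
    (Fintype.bijective_iff_injective_and_card σ).2 ⟨hσ, by simp⟩
  exact Set.ncard_preimage_of_injective_subset_range hσ
    (by rw [Set.range_eq_univ.2 hbij.2]; exact Set.subset_univ _)

lemma span_formula (σ : Fin 9 → ZMod 9) (hσ : Function.Injective σ) (i : Fin 9) :
    spanC9 σ i = min ((σ (i + 1) - σ i).val - 1) ((σ i - σ (i + 1)).val - 1) := by
  unfold spanC9
  rw [edge_set_eq σ hσ i (i + 1), preimage_ncard σ hσ, arc_ncard]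
  have h2 : {j : Fin 9 | j ≠ i ∧ j ≠ i + 1 ∧ InArc (σ (i + 1)) (σ i) (σ j)}
      = {j : Fin 9 | j ≠ (i + 1) ∧ j ≠ i ∧ InArc (σ (i + 1)) (σ i) (σ j)} := by
    ext j; simp only [Set.mem_setOf_eq]; tauto
  rw [h2, edge_set_eq σ hσ (i + 1) i, preimage_ncard σ hσ, arc_ncard]

lemma span_le_two_iff (σ : Fin 9 → ZMod 9) (hσ : Function.Injective σ) (i : Fin 9) :
    spanC9 σ i ≤ 2 ↔ (σ (i + 1) - σ i ≠ 4 ∧ σ (i + 1) - σ i ≠ -4) := by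
  rw [span_formula σ hσ i]
  have hne : σ (i + 1) - σ i ≠ 0 := by
    intro h
    have : σ (i + 1) = σ i := by linear_combination h
    have := hσ this
    simp at this
  have key : ∀ d : ZMod 9, d ≠ 0 →
      (min (d.val - 1) ((-d).val - 1) ≤ 2 ↔ (d ≠ 4 ∧ d ≠ -4)) := by decide
  have : σ i - σ (i + 1) = -(σ (i + 1) - σ i) := by ring
  rw [this]
  exact key _ hne

lemma step_eq (a b : ZMod 9) (ha : a = 4 ∨ a = -4) (hb : b = 4 ∨ b = -4)
    (hne : b ≠ -a) : b = a := by
  rcases ha with rfl | rfl <;> rcases hb with rfl | rfl <;> first | rfl | (exfalso; apply hne; decide)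

/-- In any cyclic arrangement of the vertices of the 9-cycle `C₉`, the number of cycle
edges of span at most 2 is never exactly one; equivalently, if eight cycle edges have
span 3 then so does the ninth. -/
theorem c9_spans_not_exactly_one_small (σ : Fin 9 → ZMod 9) (hσ : Function.Injective σ) :
    {i : Fin 9 | spanC9 σ i ≤ 2}.ncard ≠ 1 := by
  intro h
  rw [Set.ncard_eq_one] at h
  obtain ⟨i₀, hset⟩ := h
  have hmem : ∀ i : Fin 9, spanC9 σ i ≤ 2 ↔ i = i₀ := by
    intro i
    constructor
    · intro hi
      have : i ∈ {i : Fin 9 | spanC9 σ i ≤ 2} := hi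
      rw [hset] at this; exact this
    · intro hi
      rw [hi]
      have : i₀ ∈ {i : Fin 9 | spanC9 σ i ≤ 2} := by
        rw [hset]; exact Set.mem_singleton i₀
      exact this
  -- steps
  set d : Fin 9 → ZMod 9 := fun t => σ (i₀ + t + 1) - σ (i₀ + t) with hd
  have hstep : ∀ t : Fin 9, t ≠ 0 → d t = 4 ∨ d t = -4 := by
    intro t ht
    have hne : i₀ + t ≠ i₀ := by
      intro h
      apply ht
      have := add_left_cancel (a := i₀) (by rw [h, add_zero] : i₀ + t = i₀ + 0)
      exact this
    have := (hmem (i₀ + t)).not.2 hne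
    rw [span_le_two_iff σ hσ (i₀ + t)] at this
    push_neg at this
    by_cases h4 : σ (i₀ + t + 1) - σ (i₀ + t) = 4
    · left; exact h4
    · right; exact this h4
  have hadj : ∀ t : Fin 9, d (t + 1) ≠ -(d t) := by
    intro t hc
    have : σ (i₀ + (t + 1) + 1) = σ (i₀ + t) := by
      have h1 : i₀ + (t + 1) = i₀ + t + 1 := by open Fin.CommRing in ring
      have := hc
      simp only [hd] at this
      rw [h1] at this
      have h2 : σ (i₀ + t + 1 + 1) - σ (i₀ + t + 1) = -(σ (i₀ + t + 1) - σ (i₀ + t)) := this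
      rw [h1]
      linear_combination h2
    have := hσ this
    have : (2 : Fin 9) = 0 := by
      have h1 : i₀ + (t + 1) + 1 = i₀ + t + 2 := by open Fin.CommRing in ring
      rw [h1] at this
      have := add_left_cancel (a := i₀ + t) (by rw [this, add_zero] : i₀ + t + 2 = i₀ + t + 0)
      exact this
    exact absurd this (by decide)
  -- all eight steps equal
  set s : ZMod 9 := d 1 with hs
  have h1 : d 1 = 4 ∨ d 1 = -4 := hstep 1 (by decide)
  have e2 : d 2 = s := step_eq _ _ h1 (hstep 2 (by decide)) (by have := hadj 1; norm_num at this ⊢; exact this)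
  have e3 : d 3 = s := by rw [← e2]; exact step_eq _ _ (e2 ▸ h1) (hstep 3 (by decide)) (by have := hadj 2; norm_num at this ⊢; exact this)
  have e4 : d 4 = s := by rw [← e3]; exact step_eq _ _ (e3 ▸ h1) (hstep 4 (by decide)) (by have := hadj 3; norm_num at this ⊢; exact this)
  have e5 : d 5 = s := by rw [← e4]; exact step_eq _ _ (e4 ▸ h1) (hstep 5 (by decide)) (by have := hadj 4; norm_num at this ⊢; exact this)
  have e6 : d 6 = s := by rw [← e5]; exact step_eq _ _ (e5 ▸ h1) (hstep 6 (by decide)) (by have := hadj 5; norm_num at this ⊢; exact this)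
  have e7 : d 7 = s := by rw [← e6]; exact step_eq _ _ (e6 ▸ h1) (hstep 7 (by decide)) (by have := hadj 6; norm_num at this ⊢; exact this)
  have e8 : d 8 = s := by rw [← e7]; exact step_eq _ _ (e7 ▸ h1) (hstep 8 (by decide)) (by have := hadj 7; norm_num at this ⊢; exact this)
  -- telescoping
  have eq0 : d 0 = -(d 1 + d 2 + d 3 + d 4 + d 5 + d 6 + d 7 + d 8) := by
    simp only [hd]
    have e : ∀ t : Fin 9, i₀ + t + 1 = i₀ + (t + 1) := by intro t; open Fin.CommRing in ring
    rw [e 0, e 1, e 2, e 3, e 4, e 5, e 6, e 7, e 8]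
    norm_num
    have h9 : i₀ + 9 = i₀ := by
      rw [show (9 : Fin 9) = 0 from rfl, add_zero]
    simp only [show (8 + 1 : Fin 9) = 0 from rfl, show (7 + 1 : Fin 9) = 8 from rfl, show (6 + 1 : Fin 9) = 7 from rfl, show (5 + 1 : Fin 9) = 6 from rfl, show (4 + 1 : Fin 9) = 5 from rfl, show (3 + 1 : Fin 9) = 4 from rfl, show (2 + 1 : Fin 9) = 3 from rfl, show (1 + 1 : Fin 9) = 2 from rfl, add_zero]
    abel
  rw [e2, e3, e4, e5, e6, e7, e8, ← hs] at eq0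
  have hd0 : d 0 = 4 ∨ d 0 = -4 := by
    rcases h1 with h | h
    · left; rw [eq0, hs, h]; decide
    · right; rw [eq0, hs, h]; decide
  -- contradiction with span at i₀
  have hspan := (hmem i₀).2 rfl
  rw [span_le_two_iff σ hσ i₀] at hspan
  have : d 0 = σ (i₀ + 1) - σ i₀ := by simp [hd]
  rw [this] at hd0
  rcases hd0 with h | h
  · exact hspan.1 h
  · exact hspan.2 h
end

section
/- Let G be a finite simple graph with m edges, let t = C(m,2) + 1, and let G′ be the disjoint union of G and a star K_{1,t} (one center adjacent to t leaves, vertex-disjoint from G). Then every straight-line drawing ρ of G′ satisfies cr(ρ) < t·(mcut(G) + 1), and there exists a straight-line drawing ρ of G′ with cr(ρ) ≥ t·mcut(G). Consequently, the maximum of cr over all straight-line drawings of G′, divided by t and rounded down, equals mcut(G). -/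
/-- The independent edges `e` and `f` cross in the straight-line drawing `ρ`:
the corresponding open segments have a common point. -/
def SLCross {V : Type*} (ρ : V → ℝ × ℝ) (e f : Sym2 V) : Prop :=
  Sym2Indep e f ∧ ∃ a b c d : V, e = s(a, b) ∧ f = s(c, d) ∧
    (openSegment ℝ (ρ a) (ρ b) ∩ openSegment ℝ (ρ c) (ρ d)).Nonempty

/-- `cr(ρ)`: the number of unordered pairs of edges of `G` that cross in the
straight-line drawing `ρ`. -/
noncomputable def slCr {V : Type*} (G : SimpleGraph V) (ρ : V → ℝ × ℝ) : ℕ :=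
  {p : Sym2 (Sym2 V) | ∃ e f : Sym2 V,
    p = s(e, f) ∧ e ∈ G.edgeSet ∧ f ∈ G.edgeSet ∧ SLCross ρ e f}.ncard

/-- `ρ` is a straight-line drawing of `G`: it is injective and no vertex image lies on the
closed segment joining the images of the endpoints of an edge not containing it. -/
def IsSLDrawing {V : Type*} (G : SimpleGraph V) (ρ : V → ℝ × ℝ) : Prop :=
  Function.Injective ρ ∧
    ∀ a b : V, G.Adj a b → ∀ v : V, v ≠ a → v ≠ b → ρ v ∉ segment ℝ (ρ a) (ρ b)

/-- `mcut(G)`: the maximum, over all vertex subsets `S`, of the number of edges of `G`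
with exactly one endpoint in `S`. -/
noncomputable def maxCut {V : Type*} (G : SimpleGraph V) : ℕ :=
  sSup {k : ℕ | ∃ S : Set V,
    {e ∈ G.edgeSet | ∃ a b : V, e = s(a, b) ∧ a ∈ S ∧ b ∉ S}.ncard = k}

/-- The disjoint union of `G` and a star `K_{1,t}`: the star has center `Sum.inr 0` and
the `t` leaves `Sum.inr j` for `j ≠ 0`. -/
def disjUnionStar {V : Type*} (G : SimpleGraph V) (t : ℕ) :
    SimpleGraph (V ⊕ Fin (t + 1)) :=
  SimpleGraph.fromEdgeSet
    ({p : Sym2 (V ⊕ Fin (t + 1)) | ∃ a b : V, G.Adj a b ∧ p = s(Sum.inl a, Sum.inl b)} ∪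
     {p : Sym2 (V ⊕ Fin (t + 1)) | ∃ j : Fin (t + 1), j ≠ 0 ∧ p = s(Sum.inr 0, Sum.inr j)})

section AuxiliaryProofs

open Set Function

/-- points on the parabola: no third on a chord -/
lemma parab_not_mem_segment (x y z : ℝ) (hx : z ≠ x) (hy : z ≠ y) :
    (z, z^2) ∉ segment ℝ (x, x^2) (y, y^2) := by
  rintro ⟨a, b, ha, hb, hab, heq⟩
  rw [Prod.ext_iff] at heq
  obtain ⟨h1, h2⟩ := heq
  simp only [Prod.fst_add, Prod.snd_add, Prod.smul_mk, smul_eq_mul] at h1 h2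
  have key : a * b * (x - y)^2 = 0 := by
    linear_combination h2 - (a*x+b*y+z)*h1 + (a*x^2+b*y^2)*hab
  rcases mul_eq_zero.1 key with h | h
  · rcases mul_eq_zero.1 h with h | h
    · exact hy (by subst h; nlinarith)
    · exact hx (by subst h; nlinarith)
  · have hxy : x = y := by
      have := pow_eq_zero_iff (n := 2) (by norm_num) |>.1 h
      linarith
    exact hx (by subst hxy; nlinarith)

/-- interleaved chords of the parabola cross -/
lemma chords_cross {w x y z : ℝ} (h1 : w < x) (h2 : x < y) (h3 : y < z) :
    (openSegment ℝ (w, w^2) (y, y^2) ∩ openSegment ℝ (x, x^2) (z, z^2)).Nonempty := by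
  have hD : w + y - x - z < 0 := by linarith
  have hD' : w + y - x - z ≠ 0 := ne_of_lt hD
  set u : ℝ := (w*y - x*z)/(w + y - x - z) with hu
  have hux : x < u := by
    rw [hu, lt_div_iff_of_neg hD]; nlinarith
  have huy : u < y := by
    rw [hu, div_lt_iff_of_neg hD]; nlinarith
  have huw : w < u := lt_trans h1 hux
  have huz : u < z := lt_trans huy h3
  have hyw : (0:ℝ) < y - w := by linarith
  have hzx : (0:ℝ) < z - x := by linarith
  refine ⟨(u, u*(w+y) - w*y), ?_, ?_⟩
  · refine ⟨(y - u)/(y - w), (u - w)/(y - w),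
      div_pos (by linarith) hyw, div_pos (by linarith) hyw, ?_, ?_⟩
    · field_simp; ring
    · rw [Prod.ext_iff]
      constructor <;> · simp only [Prod.fst_add, Prod.snd_add, Prod.smul_mk, smul_eq_mul]
                        field_simp; ring
  · refine ⟨(z - u)/(z - x), (u - x)/(z - x),
      div_pos (by linarith) hzx, div_pos (by linarith) hzx, ?_, ?_⟩
    · field_simp; ring
    · rw [Prod.ext_iff]
      constructor <;> · simp only [Prod.fst_add, Prod.snd_add, Prod.smul_mk, smul_eq_mul]
                        rw [hu]; field_simp; ring

lemma prod_ext' {x y : ℝ × ℝ} (h1 : x.1 = y.1) (h2 : x.2 = y.2) : x = y :=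
  Prod.ext_iff.2 ⟨h1, h2⟩

/-- core separation lemma -/
lemma cross_opposite_sides (p q r s : ℝ × ℝ)
    (hr : r ∉ segment ℝ p q) (hs : s ∉ segment ℝ p q) (hp : p ∉ segment ℝ r s)
    (hne : (openSegment ℝ p q ∩ openSegment ℝ r s).Nonempty) :
    ((q.1-p.1)*(r.2-p.2) - (q.2-p.2)*(r.1-p.1)) *
      ((q.1-p.1)*(s.2-p.2) - (q.2-p.2)*(s.1-p.1)) < 0 := by
  obtain ⟨zz, ⟨a, b, ha, hb, hab, hz1⟩, ⟨c, e, hc, he, hce, hz2⟩⟩ := hne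
  rw [Prod.ext_iff] at hz1 hz2
  simp only [Prod.fst_add, Prod.snd_add, Prod.smul_fst, Prod.smul_snd,
    smul_eq_mul] at hz1 hz2
  obtain ⟨hz11, hz12⟩ := hz1
  obtain ⟨hz21, hz22⟩ := hz2
  -- p ≠ q
  have hpq : p ≠ q := by
    rintro rfl
    apply hp
    have h1 : p.1 = zz.1 := by linear_combination hz11 - p.1 * hab
    have h2 : p.2 = zz.2 := by linear_combination hz12 - p.2 * hab
    exact (prod_ext' h1 h2) ▸ openSegment_subset_segment ℝ r s
      ⟨c, e, hc, he, hce, prod_ext' hz21 hz22⟩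
  have hd : q.1 - p.1 ≠ 0 ∨ q.2 - p.2 ≠ 0 := by
    by_contra h
    push_neg at h
    exact hpq (prod_ext' (by linarith [h.1]) (by linarith [h.2])).symm
  -- z is on the line through p and q
  have hfz : (q.1-p.1)*(zz.2-p.2) - (q.2-p.2)*(zz.1-p.1) = 0 := by
    linear_combination (q.2-p.2)*hz11 - (q.1-p.1)*hz12 + (q.1*p.2 - q.2*p.1)*hab
  have hkey : c * ((q.1-p.1)*(r.2-p.2) - (q.2-p.2)*(r.1-p.1))
      + e * ((q.1-p.1)*(s.2-p.2) - (q.2-p.2)*(s.1-p.1)) = 0 := by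
    linear_combination (q.1-p.1)*hz22 - (q.2-p.2)*hz21
      + ((q.1-p.1)*(-p.2) - (q.2-p.2)*(-p.1))*hce + hfz
  have hfr0 : (q.1-p.1)*(r.2-p.2) - (q.2-p.2)*(r.1-p.1) ≠ 0 := by
    intro h0
    have hfs0 : (q.1-p.1)*(s.2-p.2) - (q.2-p.2)*(s.1-p.1) = 0 := by
      have he' : e * ((q.1-p.1)*(s.2-p.2) - (q.2-p.2)*(s.1-p.1)) = 0 := by
        linear_combination hkey - c * h0
      rcases mul_eq_zero.1 he' with h | h
      · exact absurd h (ne_of_gt he)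
      · exact h
    -- collinear case
    have hD : (0:ℝ) < (q.1-p.1)^2 + (q.2-p.2)^2 := by
      rcases hd with h | h
      · positivity
      · positivity
    have hDne : (q.1-p.1)^2 + (q.2-p.2)^2 ≠ 0 := ne_of_gt hD
    obtain ⟨α, hαdef⟩ : ∃ x : ℝ,
        x = ((r.1-p.1)*(q.1-p.1) + (r.2-p.2)*(q.2-p.2))/((q.1-p.1)^2 + (q.2-p.2)^2) := ⟨_, rfl⟩
    obtain ⟨β, hβdef⟩ : ∃ x : ℝ,
        x = ((s.1-p.1)*(q.1-p.1) + (s.2-p.2)*(q.2-p.2))/((q.1-p.1)^2 + (q.2-p.2)^2) := ⟨_, rfl⟩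
    have hr1 : r.1 = p.1 + α*(q.1-p.1) := by
      rw [hαdef]; field_simp
      linear_combination (-(q.2-p.2))*h0
    have hr2 : r.2 = p.2 + α*(q.2-p.2) := by
      rw [hαdef]; field_simp
      linear_combination (q.1-p.1)*h0
    have hs1 : s.1 = p.1 + β*(q.1-p.1) := by
      rw [hβdef]; field_simp
      linear_combination (-(q.2-p.2))*hfs0
    have hs2 : s.2 = p.2 + β*(q.2-p.2) := by
      rw [hβdef]; field_simp
      linear_combination (q.1-p.1)*hfs0
    have hzz1 : zz.1 = p.1 + b*(q.1-p.1) := by linear_combination p.1*hab - hz11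
    have hzz2 : zz.2 = p.2 + b*(q.2-p.2) := by linear_combination p.2*hab - hz12
    have hbce : b = c*α + e*β := by
      rcases hd with h | h
      · refine mul_right_cancel₀ h ?_
        rw [hr1, hs1, hzz1] at hz21
        linear_combination p.1*hce - hz21
      · refine mul_right_cancel₀ h ?_
        rw [hr2, hs2, hzz2] at hz22
        linear_combination p.2*hce - hz22
    have hb1 : b < 1 := by linarith
    have hαr : α < 0 ∨ 1 < α := by
      by_contra hcon
      push_neg at hcon
      exact hr ⟨1-α, α, by linarith [hcon.2], hcon.1, by ring,
        prod_ext' (by simp only [Prod.fst_add, Prod.smul_fst, smul_eq_mul]; rw [hr1]; ring)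
                  (by simp only [Prod.snd_add, Prod.smul_snd, smul_eq_mul]; rw [hr2]; ring)⟩
    have hβs : β < 0 ∨ 1 < β := by
      by_contra hcon
      push_neg at hcon
      exact hs ⟨1-β, β, by linarith [hcon.2], hcon.1, by ring,
        prod_ext' (by simp only [Prod.fst_add, Prod.smul_fst, smul_eq_mul]; rw [hs1]; ring)
                  (by simp only [Prod.snd_add, Prod.smul_snd, smul_eq_mul]; rw [hs2]; ring)⟩
    clear hαdef hβdef hfz hkey h0 hfs0 hz11 hz12 hz21 hz22 hzz1 hzz2 hD hDne
    have hmix : α * β < 0 := by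
      rcases hαr with hA | hA <;> rcases hβs with hB | hB
      · exact absurd hbce (by
          have h1 := mul_neg_of_pos_of_neg hc hA
          have h2 := mul_neg_of_pos_of_neg he hB
          intro hh; linarith)
      · exact mul_neg_of_neg_of_pos hA (by linarith)
      · exact mul_neg_of_pos_of_neg (by linarith) hB
      · exact absurd hbce (by
          have h1 := mul_lt_mul_of_pos_left hA hc
          have h2 := mul_lt_mul_of_pos_left hB he
          intro hh; nlinarith)
    have hαβ : α - β ≠ 0 := by
      intro h; rw [sub_eq_zero] at h; rw [h] at hmix; nlinarith [mul_self_nonneg β]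
    apply hp
    have hμ1 : 0 ≤ 1 - α/(α-β) := by
      have heq : 1 - α/(α-β) = -β/(α-β) := by field_simp; ring
      rw [heq]
      rcases lt_or_gt_of_ne hαβ with h | h
      · apply le_of_lt; apply div_pos_of_neg_of_neg _ h; nlinarith
      · apply le_of_lt; apply div_pos _ h; nlinarith
    have hμ2 : 0 ≤ α/(α-β) := by
      rcases lt_or_gt_of_ne hαβ with h | h
      · apply le_of_lt; apply div_pos_of_neg_of_neg _ h; nlinarith
      · apply le_of_lt; apply div_pos _ h; nlinarith
    refine ⟨1 - α/(α-β), α/(α-β), hμ1, hμ2, by ring, ?_⟩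
    refine prod_ext' ?_ ?_
    · simp only [Prod.fst_add, Prod.smul_fst, smul_eq_mul]
      rw [hr1, hs1]; field_simp; ring
    · simp only [Prod.snd_add, Prod.smul_snd, smul_eq_mul]
      rw [hr2, hs2]; field_simp; ring
  have hfs0 : (q.1-p.1)*(s.2-p.2) - (q.2-p.2)*(s.1-p.1) ≠ 0 := by
    intro h0
    apply hfr0
    have hc' : c * ((q.1-p.1)*(r.2-p.2) - (q.2-p.2)*(r.1-p.1)) = 0 := by
      linear_combination hkey - e * h0
    rcases mul_eq_zero.1 hc' with h | h
    · exact absurd h (ne_of_gt hc)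
    · exact h
  rcases hfr0.lt_or_gt with h | h
  · have : 0 < (q.1-p.1)*(s.2-p.2) - (q.2-p.2)*(s.1-p.1) := by nlinarith
    exact mul_neg_of_neg_of_pos h this
  · have : (q.1-p.1)*(s.2-p.2) - (q.2-p.2)*(s.1-p.1) < 0 := by nlinarith
    exact mul_neg_of_pos_of_neg h this

lemma SLCross.symm {V : Type*} {ρ : V → ℝ × ℝ} {e f : Sym2 V} (h : SLCross ρ e f) :
    SLCross ρ f e := by
  obtain ⟨hind, a, b, c, d, h1, h2, hne⟩ := h
  refine ⟨fun x hx hx' => hind x hx' hx, c, d, a, b, h2, h1, hne.imp fun z hz => ⟨hz.2, hz.1⟩⟩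

lemma mem_edgeSet_disjUnionStar {V : Type*} {G : SimpleGraph V} {t : ℕ}
    {e : Sym2 (V ⊕ Fin (t + 1))} :
    e ∈ (disjUnionStar G t).edgeSet ↔
      (∃ a b : V, G.Adj a b ∧ e = s(Sum.inl a, Sum.inl b)) ∨
      (∃ j : Fin (t + 1), j ≠ 0 ∧ e = s(Sum.inr 0, Sum.inr j)) := by
  rw [disjUnionStar, SimpleGraph.edgeSet_fromEdgeSet, Set.mem_diff]
  constructor
  · rintro ⟨h, -⟩; exact h
  · intro h
    refine ⟨h, ?_⟩
    rcases h with ⟨a, b, hab, rfl⟩ | ⟨j, hj, rfl⟩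
    · simp only [Sym2.diagSet, Set.mem_setOf_eq, Sym2.mk_isDiag_iff]
      intro hc
      exact G.ne_of_adj hab (Sum.inl_injective hc)
    · simp only [Sym2.diagSet, Set.mem_setOf_eq, Sym2.mk_isDiag_iff]
      intro hc
      exact hj (Sum.inr_injective hc).symm

lemma adj_disjUnionStar_inl {V : Type*} {G : SimpleGraph V} {t : ℕ} {a b : V}
    (h : G.Adj a b) : (disjUnionStar G t).Adj (Sum.inl a) (Sum.inl b) :=
  (disjUnionStar G t).mem_edgeSet.1 (mem_edgeSet_disjUnionStar.2 (Or.inl ⟨a, b, h, rfl⟩))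

lemma adj_disjUnionStar_inr {V : Type*} {G : SimpleGraph V} {t : ℕ} {j : Fin (t+1)}
    (h : j ≠ 0) : (disjUnionStar G t).Adj (Sum.inr 0) (Sum.inr j) :=
  (disjUnionStar G t).mem_edgeSet.1 (mem_edgeSet_disjUnionStar.2 (Or.inr ⟨j, h, rfl⟩))

/-- cut set -/
def cutSet {V : Type*} (G : SimpleGraph V) (S : Set V) : Set (Sym2 V) :=
  {e ∈ G.edgeSet | ∃ a b : V, e = s(a, b) ∧ a ∈ S ∧ b ∉ S}

lemma maxCut_eq_sSup {V : Type*} (G : SimpleGraph V) :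
    maxCut G = sSup {k : ℕ | ∃ S : Set V, (cutSet G S).ncard = k} := rfl

lemma bddAbove_cut {V : Type*} [Fintype V] (G : SimpleGraph V) :
    BddAbove {k : ℕ | ∃ S : Set V, (cutSet G S).ncard = k} := by
  refine ⟨G.edgeSet.ncard, ?_⟩
  rintro k ⟨S, rfl⟩
  exact Set.ncard_le_ncard (fun e he => he.1) (Set.toFinite _)

lemma cutSet_ncard_le_maxCut {V : Type*} [Fintype V] (G : SimpleGraph V) (S : Set V) :
    (cutSet G S).ncard ≤ maxCut G :=
  le_csSup (bddAbove_cut G) ⟨S, rfl⟩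

lemma exists_maxCut {V : Type*} [Fintype V] (G : SimpleGraph V) :
    ∃ S : Set V, (cutSet G S).ncard = maxCut G := by
  have h := Nat.sSup_mem (s := {k : ℕ | ∃ S : Set V, (cutSet G S).ncard = k})
    ⟨(cutSet G ∅).ncard, ⟨∅, rfl⟩⟩ (bddAbove_cut G)
  exact h

/-- product ncard -/
lemma ncard_prod' {α β : Type*} (s : Set α) (t : Set β) :
    (s ×ˢ t).ncard = s.ncard * t.ncard := by
  rw [← Nat.card_coe_set_eq, ← Nat.card_coe_set_eq, ← Nat.card_coe_set_eq,
    Nat.card_congr (Equiv.Set.prod s t), Nat.card_prod]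

/-- biUnion card bound -/
lemma ncard_biUnion_le' {ι α : Type*} (s : Finset ι) (f : ι → Set α)
    (hf : ∀ i, (f i).Finite) :
    (⋃ i ∈ s, f i).ncard ≤ ∑ i ∈ s, (f i).ncard := by
  classical
  induction s using Finset.induction_on with
  | empty => simp
  | @insert a s' hx ih =>
    rw [Finset.sum_insert hx]
    refine le_trans (le_trans (Set.ncard_le_ncard (by
      intro z hz
      simp only [Set.mem_iUnion, Set.mem_union, Finset.mem_insert, exists_prop] at hz ⊢
      obtain ⟨i, hi, hzi⟩ := hz
      rcases hi with rfl | hi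
      · exact Or.inl hzi
      · exact Or.inr ⟨i, hi, hzi⟩) (Set.Finite.union (hf a) (Set.Finite.biUnion s'.finite_toSet (fun i _ => hf i)))) (Set.ncard_union_le _ _)) ?_
    exact Nat.add_le_add_left ih _

lemma openSegment_pair_eq {W : Type*} (ρ : W → ℝ × ℝ) {u v a b : W}
    (h : s(u,v) = s(a,b)) :
    openSegment ℝ (ρ a) (ρ b) = openSegment ℝ (ρ u) (ρ v) := by
  rcases Sym2.eq_iff.1 h with ⟨rfl, rfl⟩ | ⟨rfl, rfl⟩
  · rfl
  · exact openSegment_symm ℝ _ _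

lemma slCr_le_upper {V : Type*} [Fintype V] (G : SimpleGraph V) (t : ℕ)
    (ρ : V ⊕ Fin (t + 1) → ℝ × ℝ) (hρ : IsSLDrawing (disjUnionStar G t) ρ) :
    slCr (disjUnionStar G t) ρ ≤ Nat.choose G.edgeSet.ncard 2 + t * maxCut G := by
  classical
  -- the signed area functional for the star edge to leaf j
  set F : Fin (t+1) → (ℝ × ℝ) → ℝ := fun j x =>
    ((ρ (Sum.inr j)).1 - (ρ (Sum.inr 0)).1) * (x.2 - (ρ (Sum.inr 0)).2)
    - ((ρ (Sum.inr j)).2 - (ρ (Sum.inr 0)).2) * (x.1 - (ρ (Sum.inr 0)).1) with hF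
  set SS : Fin (t+1) → Set V := fun j => {a : V | 0 < F j (ρ (Sum.inl a))} with hSS
  have cross_to_cut : ∀ j : Fin (t+1), j ≠ 0 → ∀ a b : V, G.Adj a b →
      SLCross ρ s(Sum.inr 0, Sum.inr j) s(Sum.inl a, Sum.inl b) →
      s(a, b) ∈ cutSet G (SS j) := by
    intro j hj a b hab hcr
    obtain ⟨hind, a', b', c', d', h1, h2, hne⟩ := hcr
    rw [openSegment_pair_eq ρ h1, openSegment_pair_eq ρ h2] at hne
    have hr : ρ (Sum.inl a) ∉ segment ℝ (ρ (Sum.inr 0)) (ρ (Sum.inr j)) :=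
      hρ.2 _ _ (adj_disjUnionStar_inr hj) (Sum.inl a) (by simp) (by simp)
    have hs : ρ (Sum.inl b) ∉ segment ℝ (ρ (Sum.inr 0)) (ρ (Sum.inr j)) :=
      hρ.2 _ _ (adj_disjUnionStar_inr hj) (Sum.inl b) (by simp) (by simp)
    have hp : ρ (Sum.inr 0) ∉ segment ℝ (ρ (Sum.inl a)) (ρ (Sum.inl b)) :=
      hρ.2 _ _ (adj_disjUnionStar_inl hab) (Sum.inr 0) (by simp) (by simp)
    have hlt := cross_opposite_sides _ _ _ _ hr hs hp hne
    have hlt' : F j (ρ (Sum.inl a)) * F j (ρ (Sum.inl b)) < 0 := hlt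
    rcases mul_neg_iff.1 hlt' with ⟨hA, hB⟩ | ⟨hA, hB⟩
    · exact ⟨G.mem_edgeSet.2 hab, a, b, rfl, hA, by simp only [hSS, Set.mem_setOf_eq]; linarith⟩
    · exact ⟨G.mem_edgeSet.2 hab, b, a, Sym2.eq_swap.symm, hB,
        by simp only [hSS, Set.mem_setOf_eq]; linarith⟩
  -- the three families of pairs
  set A₀ : Set (Sym2 (Sym2 V)) :=
    {p | ∃ e f : Sym2 V, p = s(e,f) ∧ e ∈ G.edgeSet ∧ f ∈ G.edgeSet ∧ e ≠ f} with hA₀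
  set A : Set (Sym2 (Sym2 (V ⊕ Fin (t+1)))) := Sym2.map (Sym2.map (Sum.inl : V → V ⊕ Fin (t+1))) '' A₀ with hA
  set Bj : Fin (t+1) → Set (Sym2 (Sym2 (V ⊕ Fin (t+1)))) := fun j =>
    {p | ∃ a b : V, G.Adj a b ∧ SLCross ρ s(Sum.inr 0, Sum.inr j) s(Sum.inl a, Sum.inl b) ∧
      p = s(s(Sum.inr 0, Sum.inr j), s(Sum.inl a, Sum.inl b))} with hBj
  set B : Set (Sym2 (Sym2 (V ⊕ Fin (t+1)))) := ⋃ j ∈ Finset.univ.erase (0 : Fin (t+1)), Bj j with hB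
  have hsub : {p : Sym2 (Sym2 (V ⊕ Fin (t+1))) | ∃ e f : Sym2 (V ⊕ Fin (t+1)),
      p = s(e, f) ∧ e ∈ (disjUnionStar G t).edgeSet ∧ f ∈ (disjUnionStar G t).edgeSet ∧
      SLCross ρ e f} ⊆ A ∪ B := by
    rintro p ⟨e, f, rfl, he, hf, hcross⟩
    rcases mem_edgeSet_disjUnionStar.1 he with ⟨a, b, hab, rfl⟩ | ⟨j, hj, rfl⟩ <;>
      rcases mem_edgeSet_disjUnionStar.1 hf with ⟨c, d, hcd, rfl⟩ | ⟨k, hk, rfl⟩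
    · left
      refine ⟨s(s(a,b), s(c,d)), ⟨s(a,b), s(c,d), rfl, G.mem_edgeSet.2 hab,
        G.mem_edgeSet.2 hcd, ?_⟩, by simp [Sym2.map_pair_eq]⟩
      intro hEq
      have : s(Sum.inl a, Sum.inl b) = (s(Sum.inl c, Sum.inl d) : Sym2 (V ⊕ Fin (t+1))) := by
        have := congrArg (Sym2.map (Sum.inl : V → V ⊕ Fin (t+1))) hEq
        simpa [Sym2.map_pair_eq] using this
      exact hcross.1 (Sum.inl a) (by simp) (by rw [← this]; simp)
    · right
      rw [hB]
      refine Set.mem_biUnion (Finset.mem_erase.2 ⟨hk, Finset.mem_univ _⟩) ?_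
      exact ⟨a, b, hab, hcross.symm, Sym2.eq_swap⟩
    · right
      rw [hB]
      refine Set.mem_biUnion (Finset.mem_erase.2 ⟨hj, Finset.mem_univ _⟩) ?_
      exact ⟨c, d, hcd, hcross, rfl⟩
    · exact absurd (hcross.1 (Sum.inr 0) (by simp)) (by simp)
  have hcount : slCr (disjUnionStar G t) ρ ≤ A.ncard + B.ncard := by
    refine le_trans (Set.ncard_le_ncard hsub (Set.toFinite _)) (Set.ncard_union_le _ _)
  -- bound on A
  have hAcard : A.ncard ≤ Nat.choose G.edgeSet.ncard 2 := by
    refine le_trans (Set.ncard_image_le (Set.toFinite _)) ?_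
    set ψ : Sym2 (Sym2 V) → Finset (Sym2 V) :=
      Sym2.lift ⟨fun e f => ({e, f} : Finset (Sym2 V)), fun e f => Finset.pair_comm e f⟩ with hψ
    have hinj : Set.InjOn ψ A₀ := by
      rintro p ⟨e, f, rfl, he, hf, hef⟩ p' ⟨e', f', rfl, he', hf', hef'⟩ hEq
      simp only [hψ, Sym2.lift_mk] at hEq
      have hmem_e : e = e' ∨ e = f' := by
        have : e ∈ ({e', f'} : Finset (Sym2 V)) := hEq ▸ Finset.mem_insert_self e {f}
        simpa using this
      have hmem_f : f = e' ∨ f = f' := by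
        have : f ∈ ({e', f'} : Finset (Sym2 V)) := by
          rw [← hEq]; simp
        simpa using this
      rcases hmem_e with h1 | h1 <;> rcases hmem_f with h2 | h2
      · exact absurd (h1.trans h2.symm) hef
      · rw [h1, h2]
      · rw [h1, h2]; exact Sym2.eq_swap
      · exact absurd (h1.trans h2.symm) hef
    have himg : ψ '' A₀ ⊆ ↑(Finset.powersetCard 2 (G.edgeSet.toFinite.toFinset)) := by
      rintro _ ⟨p, ⟨e, f, rfl, he, hf, hef⟩, rfl⟩
      simp only [hψ, Sym2.lift_mk, Finset.coe_sort_coe, Finset.mem_coe]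
      refine Finset.mem_powersetCard.2 ⟨?_, Finset.card_pair hef⟩
      refine Finset.insert_subset (by rw [Set.Finite.mem_toFinset]; exact he)
        (Finset.singleton_subset_iff.2 (by rw [Set.Finite.mem_toFinset]; exact hf))
    calc A₀.ncard = (ψ '' A₀).ncard := (Set.ncard_image_of_injOn hinj).symm
      _ ≤ (↑(Finset.powersetCard 2 (G.edgeSet.toFinite.toFinset)) : Set (Finset (Sym2 V))).ncard :=
          Set.ncard_le_ncard himg (Set.toFinite _)
      _ = (Finset.powersetCard 2 (G.edgeSet.toFinite.toFinset)).card := Set.ncard_coe_finset _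
      _ = (G.edgeSet.toFinite.toFinset).card.choose 2 := Finset.card_powersetCard _ _
      _ = Nat.choose G.edgeSet.ncard 2 := by rw [← Set.ncard_eq_toFinset_card]
  -- bound on B
  have hBcard : B.ncard ≤ t * maxCut G := by
    rw [hB]
    refine le_trans (ncard_biUnion_le' _ _ (fun j => Set.toFinite _)) ?_
    have hone : ∀ j ∈ Finset.univ.erase (0 : Fin (t+1)), (Bj j).ncard ≤ maxCut G := by
      intro j hj
      have hj0 : j ≠ 0 := (Finset.mem_erase.1 hj).1
      have hsubj : Bj j ⊆ (fun e => s(s(Sum.inr 0, Sum.inr j), Sym2.map Sum.inl e)) ''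
          cutSet G (SS j) := by
        rintro p ⟨a, b, hab, hcross, rfl⟩
        exact ⟨s(a,b), cross_to_cut j hj0 a b hab hcross, by simp [Sym2.map_pair_eq]⟩
      refine le_trans (Set.ncard_le_ncard hsubj (Set.toFinite _)) ?_
      refine le_trans (Set.ncard_image_le (Set.toFinite _)) ?_
      exact cutSet_ncard_le_maxCut G (SS j)
    refine le_trans (Finset.sum_le_sum hone) ?_
    rw [Finset.sum_const, Finset.card_erase_of_mem (Finset.mem_univ _), Finset.card_univ,
      Fintype.card_fin, smul_eq_mul]
    simp
  exact le_trans hcount (Nat.add_le_add hAcard hBcard)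

lemma exists_good_drawing {V : Type*} [Fintype V] (G : SimpleGraph V) (t : ℕ) :
    ∃ ρ : V ⊕ Fin (t + 1) → ℝ × ℝ, IsSLDrawing (disjUnionStar G t) ρ ∧
      t * maxCut G ≤ slCr (disjUnionStar G t) ρ := by
  classical
  obtain ⟨S, hS⟩ := exists_maxCut G
  set n := Fintype.card V with hn
  set eV : V ≃ Fin n := Fintype.equivFin V with heV
  set χ : V ⊕ Fin (t + 1) → ℝ := Sum.elim
    (fun v => if v ∈ S then ((eV v : ℕ) : ℝ)/(n+1) else 3 + ((eV v : ℕ) : ℝ)/(n+1))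
    (fun j => if j = (0 : Fin (t+1)) then (2:ℝ) else 5 + ((j : ℕ) : ℝ)/(t+2)) with hχ
  have hfrac : ∀ v : V, 0 ≤ ((eV v : ℕ) : ℝ)/(n+1) ∧ ((eV v : ℕ) : ℝ)/(n+1) < 1 := by
    intro v
    constructor
    · positivity
    · rw [div_lt_one (by positivity)]
      have : ((eV v : ℕ) : ℝ) < n := by exact_mod_cast (eV v).isLt
      linarith
  have hfrac2 : ∀ j : Fin (t+1), j ≠ 0 → 0 < ((j : ℕ) : ℝ)/(t+2) ∧ ((j : ℕ) : ℝ)/(t+2) < 1 := by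
    intro j hj
    have h1 : 1 ≤ (j : ℕ) := Nat.one_le_iff_ne_zero.2 (fun h => hj (Fin.ext (by simp [h])))
    have h2 : (j : ℕ) < t + 1 := j.isLt
    constructor
    · apply div_pos (by exact_mod_cast h1) (by positivity)
    · rw [div_lt_one (by positivity)]
      have : ((j:ℕ) : ℝ) < t + 1 := by exact_mod_cast h2
      linarith
  have hrS : ∀ v ∈ S, 0 ≤ χ (Sum.inl v) ∧ χ (Sum.inl v) < 1 := by
    intro v hv
    simp only [hχ, Sum.elim_inl, if_pos hv]
    exact hfrac v
  have hrT : ∀ v, v ∉ S → 3 ≤ χ (Sum.inl v) ∧ χ (Sum.inl v) < 4 := by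
    intro v hv
    simp only [hχ, Sum.elim_inl, if_neg hv]
    have := hfrac v
    constructor <;> linarith [this.1, this.2]
  have hc0 : χ (Sum.inr 0) = 2 := by simp [hχ]
  have hrJ : ∀ j : Fin (t+1), j ≠ 0 → 5 < χ (Sum.inr j) ∧ χ (Sum.inr j) < 6 := by
    intro j hj
    simp only [hχ, Sum.elim_inr, if_neg hj]
    have := hfrac2 j hj
    constructor <;> linarith [this.1, this.2]
  -- injectivity of χ
  have hχinj : Function.Injective χ := by
    have hcast : ∀ v w : V, ((eV v : ℕ) : ℝ)/(n+1) = ((eV w : ℕ) : ℝ)/(n+1) → v = w := by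
      intro v w h
      have h3 : (eV v : ℕ) = (eV w : ℕ) := by
        field_simp at h; exact_mod_cast h
      have h4 : eV v = eV w := Fin.ext h3
      exact eV.injective h4
    intro x y h
    match x, y with
    | Sum.inl v, Sum.inl w =>
      by_cases hv : v ∈ S <;> by_cases hw : w ∈ S
      · simp only [hχ, Sum.elim_inl, if_pos hv, if_pos hw] at h
        exact congrArg Sum.inl (hcast v w h)
      · exfalso; have h1 := (hrS v hv).2; have h2 := (hrT w hw).1
        simp only [hχ, Sum.elim_inl, if_pos hv, if_neg hw] at h h1 h2; linarith
      · exfalso; have h1 := (hrT v hv).1; have h2 := (hrS w hw).2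
        simp only [hχ, Sum.elim_inl, if_neg hv, if_pos hw] at h h1 h2; linarith
      · simp only [hχ, Sum.elim_inl, if_neg hv, if_neg hw] at h
        exact congrArg Sum.inl (hcast v w (by linarith))
    | Sum.inl v, Sum.inr j =>
      exfalso
      by_cases hv : v ∈ S <;> by_cases hj : j = (0 : Fin (t+1))
      · have h1 := (hrS v hv).2; rw [h, hj, hc0] at h1; linarith
      · have h1 := (hrS v hv).2; have h2 := (hrJ j hj).1; rw [h] at h1; linarith
      · have h1 := (hrT v hv).1; rw [h, hj, hc0] at h1; linarith
      · have h1 := (hrT v hv).2; have h2 := (hrJ j hj).1; rw [h] at h1; linarith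
    | Sum.inr j, Sum.inl v =>
      exfalso
      by_cases hv : v ∈ S <;> by_cases hj : j = (0 : Fin (t+1))
      · have h1 := (hrS v hv).2; rw [← h, hj, hc0] at h1; linarith
      · have h1 := (hrS v hv).2; have h2 := (hrJ j hj).1; rw [← h] at h1; linarith
      · have h1 := (hrT v hv).1; rw [← h, hj, hc0] at h1; linarith
      · have h1 := (hrT v hv).2; have h2 := (hrJ j hj).1; rw [← h] at h1; linarith
    | Sum.inr j, Sum.inr k =>
      by_cases hj : j = (0 : Fin (t+1)) <;> by_cases hk : k = (0 : Fin (t+1))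
      · rw [hj, hk]
      · exfalso; have h2 := (hrJ k hk).1; rw [← h, hj, hc0] at h2; linarith
      · exfalso; have h2 := (hrJ j hj).1; rw [h, hk, hc0] at h2; linarith
      · simp only [hχ, Sum.elim_inr, if_neg hj, if_neg hk] at h
        have h3 : (j : ℕ) = (k : ℕ) := by
          field_simp at h; exact_mod_cast add_left_cancel h
        exact congrArg Sum.inr (Fin.ext h3)
  set ρ : V ⊕ Fin (t + 1) → ℝ × ℝ := fun x => (χ x, (χ x)^2) with hρdef
  have hdraw : IsSLDrawing (disjUnionStar G t) ρ := by
    constructor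
    · intro x y h
      apply hχinj
      have := congrArg Prod.fst h
      simpa [hρdef] using this
    · intro a b hadj v hva hvb
      have h1 : χ v ≠ χ a := fun h => hva (hχinj h)
      have h2 : χ v ≠ χ b := fun h => hvb (hχinj h)
      exact parab_not_mem_segment (χ a) (χ b) (χ v) h1 h2
  refine ⟨ρ, hdraw, ?_⟩
  -- the injection from (leaf, cut-edge) pairs into crossing pairs
  set L : Set (Fin (t+1)) := {j | j ≠ 0} with hL
  have hLcard : L.ncard = t := by
    have : L = ↑(Finset.univ.erase (0 : Fin (t+1))) := by
      ext j; simp [hL]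
    rw [this, Set.ncard_coe_finset, Finset.card_erase_of_mem (Finset.mem_univ _),
      Finset.card_univ, Fintype.card_fin]
    rfl
  set Φ : Fin (t+1) × Sym2 V → Sym2 (Sym2 (V ⊕ Fin (t+1))) :=
    fun q => s(s(Sum.inr 0, Sum.inr q.1), Sym2.map Sum.inl q.2) with hΦ
  set Cr : Set (Sym2 (Sym2 (V ⊕ Fin (t+1)))) := {p | ∃ e f : Sym2 (V ⊕ Fin (t+1)),
    p = s(e, f) ∧ e ∈ (disjUnionStar G t).edgeSet ∧ f ∈ (disjUnionStar G t).edgeSet ∧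
    SLCross ρ e f} with hCr
  have himg : Φ '' (L ×ˢ cutSet G S) ⊆ Cr := by
    rintro _ ⟨⟨j, e⟩, ⟨hj, he⟩, rfl⟩
    obtain ⟨heE, a, b, heq, haS, hbS⟩ := he
    subst heq
    have hGab : G.Adj a b := G.mem_edgeSet.1 heE
    have hjne : j ≠ 0 := hj
    refine ⟨s(Sum.inr 0, Sum.inr j), s(Sum.inl a, Sum.inl b), by simp [hΦ, Sym2.map_pair_eq],
      mem_edgeSet_disjUnionStar.2 (Or.inr ⟨j, hjne, rfl⟩),
      mem_edgeSet_disjUnionStar.2 (Or.inl ⟨a, b, hGab, rfl⟩), ?_, ?_⟩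
    · intro x hx hx'
      rcases Sym2.mem_iff.1 hx with rfl | rfl <;>
        rcases Sym2.mem_iff.1 hx' with h | h <;> simp_all
    · refine ⟨Sum.inr 0, Sum.inr j, Sum.inl a, Sum.inl b, rfl, rfl, ?_⟩
      have hwx : χ (Sum.inl a) < χ (Sum.inr 0) := by
        rw [hc0]; linarith [(hrS a haS).2]
      have hxy : χ (Sum.inr 0) < χ (Sum.inl b) := by
        rw [hc0]; linarith [(hrT b hbS).1]
      have hyz : χ (Sum.inl b) < χ (Sum.inr j) := by
        linarith [(hrT b hbS).2, (hrJ j hjne).1]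
      have hcc := chords_cross hwx hxy hyz
      exact hcc.imp fun z hz => ⟨hz.2, hz.1⟩
  have hinj : Set.InjOn Φ (L ×ˢ cutSet G S) := by
    rintro ⟨j, e⟩ ⟨hj, he⟩ ⟨j', e'⟩ ⟨hj', he'⟩ hEq
    simp only [hΦ] at hEq
    rcases Sym2.eq_iff.1 hEq with ⟨hAA, hBB⟩ | ⟨hAB, hBA⟩
    · rcases Sym2.eq_iff.1 hAA with ⟨-, hjj⟩ | ⟨h0j, -⟩
      · have hjj' : j = j' := Sum.inr_injective hjj
        have hee : e = e' := Sym2.map.injective Sum.inl_injective hBB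
        rw [hjj', hee]
      · exact absurd (Sum.inr_injective h0j).symm hj'
    · exfalso
      have : Sum.inr 0 ∈ Sym2.map (Sum.inl : V → V ⊕ Fin (t+1)) e' := by
        rw [← hAB]; simp
      obtain ⟨y, -, hy⟩ := Sym2.mem_map.1 this
      exact absurd hy (by simp)
  calc t * maxCut G = L.ncard * (cutSet G S).ncard := by rw [hLcard, hS]
    _ = (L ×ˢ cutSet G S).ncard := (ncard_prod' _ _).symm
    _ = (Φ '' (L ×ˢ cutSet G S)).ncard := (Set.ncard_image_of_injOn hinj).symm
    _ ≤ Cr.ncard := Set.ncard_le_ncard himg (Set.toFinite _)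
    _ = slCr (disjUnionStar G t) ρ := rfl

end AuxiliaryProofs

/-- Adding a star with `t = C(m,2) + 1` edges to a graph `G` with `m` edges makes the
maximum rectilinear crossing number encode `mcut(G)`: every straight-line drawing of
`G' = G + K_{1,t}` has fewer than `t·(mcut(G)+1)` crossings, some straight-line drawing
has at least `t·mcut(G)` crossings, and hence the maximum number of crossings divided by
`t` (rounded down) equals `mcut(G)`. -/
theorem star_augmented_crossing_encodes_maxcut {V : Type*} [Fintype V]
    (G : SimpleGraph V) (t : ℕ) (ht : t = Nat.choose G.edgeSet.ncard 2 + 1) :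
    (∀ ρ : V ⊕ Fin (t + 1) → ℝ × ℝ, IsSLDrawing (disjUnionStar G t) ρ →
        slCr (disjUnionStar G t) ρ < t * (maxCut G + 1)) ∧
    (∃ ρ : V ⊕ Fin (t + 1) → ℝ × ℝ, IsSLDrawing (disjUnionStar G t) ρ ∧
        t * maxCut G ≤ slCr (disjUnionStar G t) ρ) ∧
    (sSup {k : ℕ | ∃ ρ : V ⊕ Fin (t + 1) → ℝ × ℝ,
        IsSLDrawing (disjUnionStar G t) ρ ∧ slCr (disjUnionStar G t) ρ = k}) / t
      = maxCut G := by
  have part1 : ∀ ρ : V ⊕ Fin (t + 1) → ℝ × ℝ, IsSLDrawing (disjUnionStar G t) ρ →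
      slCr (disjUnionStar G t) ρ < t * (maxCut G + 1) := by
    intro ρ hρ
    have hbound : Nat.choose G.edgeSet.ncard 2 + t * maxCut G < t * (maxCut G + 1) := by
      have h1 : Nat.choose G.edgeSet.ncard 2 < t := by omega
      calc Nat.choose G.edgeSet.ncard 2 + t * maxCut G
          < t + t * maxCut G := Nat.add_lt_add_right h1 _
        _ = t * (maxCut G + 1) := by ring
    exact lt_of_le_of_lt (slCr_le_upper G t ρ hρ) hbound
  obtain ⟨ρ₀, hd0, hge⟩ := exists_good_drawing G t
  refine ⟨part1, ⟨ρ₀, hd0, hge⟩, ?_⟩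
  set K : Set ℕ := {k : ℕ | ∃ ρ : V ⊕ Fin (t + 1) → ℝ × ℝ,
    IsSLDrawing (disjUnionStar G t) ρ ∧ slCr (disjUnionStar G t) ρ = k} with hK
  have hne : K.Nonempty := ⟨slCr (disjUnionStar G t) ρ₀, ρ₀, hd0, rfl⟩
  have hbdd : BddAbove K := by
    refine ⟨t * (maxCut G + 1), ?_⟩
    rintro k ⟨ρ, hρ, rfl⟩
    exact le_of_lt (part1 ρ hρ)
  have hub : sSup K < t * (maxCut G + 1) := by
    obtain ⟨ρ, hρ, hsup⟩ := Nat.sSup_mem hne hbdd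
    rw [← hsup]
    exact part1 ρ hρ
  have hlb : t * maxCut G ≤ sSup K :=
    le_trans hge (le_csSup hbdd ⟨ρ₀, hd0, rfl⟩)
  refine Nat.div_eq_of_lt_le ?_ ?_
  · rw [Nat.mul_comm]; exact hlb
  · rw [Nat.mul_comm]; exact hub
end

section
/- A finite tree T (with its unique bipartition into the two color classes of a proper 2-coloring) admits a two-layer drawing with zero crossings if and only if T is a caterpillar. -/
/-- Two edges `e` and `f` of a bipartite graph with proper 2-coloring `C` cross in the
two-layer drawing in which vertices are placed on the layer given by their color, at
positions given by `p`:  writing `e = ab` and `f = cd` with `a, c` on one layer and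
`b, d` on the other, the edges share no endpoint and their endpoints interleave. -/
def TLColorCross {V : Type*} (C : V → Bool) (p : V → ℕ) (e f : Sym2 V) : Prop :=
  ∃ a b c d : V, e = s(a, b) ∧ f = s(c, d) ∧
    C b ≠ C a ∧ C c = C a ∧ C d = C b ∧ a ≠ c ∧ b ≠ d ∧
    ((p a < p c ∧ p d < p b) ∨ (p c < p a ∧ p b < p d))

/-- A caterpillar is a tree in which all vertices of degree at least 2 lie on a
common path. -/
def IsCaterpillar {V : Type*} (T : SimpleGraph V) : Prop :=
  ∃ (u v : V) (w : T.Walk u v), w.IsPath ∧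
    ∀ x : V, 2 ≤ (T.neighborSet x).ncard → x ∈ w.support

section Aux

open SimpleGraph Walk

universe u

variable {V : Type*} {T : SimpleGraph V}

/-- The inclusion homomorphism from an induced subgraph. -/
def inducedHom (T : SimpleGraph V) (s : Set V) : T.induce s →g T :=
  ⟨Subtype.val, fun {a b} h => h⟩

lemma aux_two_nbrs [Fintype V] {x a b : V} (hab : a ≠ b) (ha : T.Adj x a) (hb : T.Adj x b) :
    2 ≤ (T.neighborSet x).ncard := by
  have hsub : ({a, b} : Set V) ⊆ T.neighborSet x := by
    intro z hz
    rcases hz with rfl | hz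
    · exact ha
    · simp only [Set.mem_singleton_iff] at hz; subst hz; exact hb
  calc 2 = ({a, b} : Set V).ncard := (Set.ncard_pair hab).symm
    _ ≤ _ := Set.ncard_le_ncard hsub (Set.toFinite _)

lemma aux_exists_nbr_ne [Fintype V] {x : V} (h2 : 2 ≤ (T.neighborSet x).ncard) (c : V) :
    ∃ m, T.Adj x m ∧ m ≠ c := by
  obtain ⟨b, hb, hbc⟩ :=
    Set.exists_ne_of_one_lt_ncard (s := T.neighborSet x) (by omega) c
  exact ⟨b, hb, hbc⟩

lemma aux_L_star [Fintype V] [DecidableEq V] (hc : T.Connected) {x y : V} (hxy : x ≠ y) :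
    ∃ c, T.Adj x c ∧ (c = y ∨ 2 ≤ (T.neighborSet c).ncard) := by
  obtain ⟨p, hp⟩ : ∃ p : T.Walk x y, p.IsPath := by
    obtain ⟨q⟩ := hc.preconnected x y
    exact ⟨q.toPath.1, q.toPath.2⟩
  cases p with
  | nil => exact absurd rfl hxy
  | @cons _ c _ h q =>
    rcases Walk.cons_isPath_iff _ _ |>.1 hp with ⟨hq, hxq⟩
    cases q with
    | nil => exact ⟨y, h, Or.inl rfl⟩
    | @cons _ c' _ h' q' =>
      refine ⟨c, h, Or.inr (aux_two_nbrs ?_ h.symm h')⟩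
      intro hxc'
      exact hxq (by rw [hxc', Walk.support_cons]; exact List.mem_cons_of_mem _ q'.start_mem_support)

lemma aux_internal [Fintype V] {u v : V} (w : T.Walk u v) (hw : w.IsPath) {x : V}
    (hx : x ∈ w.support) (hxu : x ≠ u) (hxv : x ≠ v) : 2 ≤ (T.neighborSet x).ncard := by
  induction w with
  | nil => simp at hx; exact absurd hx hxu
  | @cons u b v h q ih =>
    rcases (Walk.cons_isPath_iff _ _).1 hw with ⟨hq, huq⟩
    have hxq : x ∈ q.support := by
      rw [Walk.support_cons, List.mem_cons] at hx
      rcases hx with rfl | h'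
      · exact absurd rfl hxu
      · exact h'
    by_cases hxb : x = b
    · subst hxb
      cases q with
      | nil => exact absurd rfl hxv
      | @cons _ c _ h' q' =>
        refine aux_two_nbrs ?_ h.symm h'
        intro huc
        apply huq
        rw [huc, Walk.support_cons]
        exact List.mem_cons_of_mem _ q'.start_mem_support
    · exact ih hq hxq hxb hxv

lemma aux_exists_leaf [Fintype V] (hT : T.IsTree) (h2 : 2 ≤ Fintype.card V) :
    ∃ ℓ y0 : V, T.neighborSet ℓ = {y0} := by
  classical
  have hedges := hT.card_edgeFinset
  have hsum := T.sum_degrees_eq_twice_card_edges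
  have hleaf : ∃ ℓ : V, T.degree ℓ ≤ 1 := by
    by_contra h
    push_neg at h
    have hge : 2 * Fintype.card V ≤ ∑ v, T.degree v := by
      calc 2 * Fintype.card V = ∑ _v : V, 2 := by
            rw [Finset.sum_const, Finset.card_univ]; ring
        _ ≤ _ := Finset.sum_le_sum (fun i _ => h i)
    omega
  obtain ⟨ℓ, hℓ⟩ := hleaf
  obtain ⟨y, hy⟩ := Fintype.exists_ne_of_one_lt_card (by omega) ℓ
  obtain ⟨c, hc, -⟩ := aux_L_star hT.isConnected (Ne.symm hy)
  refine ⟨ℓ, c, ?_⟩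
  ext z
  simp only [mem_neighborSet, Set.mem_singleton_iff]
  constructor
  · intro hz
    exact Finset.card_le_one.1 hℓ z ((T.mem_neighborFinset ℓ z).2 hz) c
      ((T.mem_neighborFinset ℓ c).2 hc)
  · rintro rfl; exact hc

lemma aux_reachable_induce {s : Set V} :
    ∀ {a b : V} (w : T.Walk a b), (∀ x ∈ w.support, x ∈ s) → ∀ (ha : a ∈ s) (hb : b ∈ s),
      (T.induce s).Reachable ⟨a, ha⟩ ⟨b, hb⟩ := by
  intro a b w
  induction w with
  | nil => intro _ ha hb; rfl
  | @cons a c b h q ih =>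
    intro hsup ha hb
    have hc : c ∈ s := hsup c (by rw [Walk.support_cons]; exact List.mem_cons_of_mem _ q.start_mem_support)
    have hstep : (T.induce s).Adj ⟨a, ha⟩ ⟨c, hc⟩ := h
    exact hstep.reachable.trans (ih (fun x hx => hsup x (by rw [Walk.support_cons]; exact List.mem_cons_of_mem _ hx)) hc hb)

lemma caterpillar_of_nospider :
    ∀ (n : ℕ) (V : Type u) [Fintype V] (T : SimpleGraph V),
    Fintype.card V ≤ n → T.IsTree →
    (∀ c n1 n2 n3 : V, T.Adj c n1 → T.Adj c n2 → T.Adj c n3 → n1 ≠ n2 → n1 ≠ n3 → n2 ≠ n3 →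
      (∃ m, T.Adj n1 m ∧ m ≠ c) → (∃ m, T.Adj n2 m ∧ m ≠ c) →
      (∃ m, T.Adj n3 m ∧ m ≠ c) → False) →
    ∃ (u v : V) (w : T.Walk u v), w.IsPath ∧
      (∀ x : V, 2 ≤ (T.neighborSet x).ncard → x ∈ w.support) ∧
      (T.neighborSet u).ncard ≤ 1 ∧ (T.neighborSet v).ncard ≤ 1 := by
  intro n
  induction n with
  | zero =>
    intro V _ T hcard hT _
    exfalso
    haveI := hT.isConnected.nonempty
    have := Fintype.card_pos (α := V)
    omega
  | succ n ih =>
    intro V instV T hcard hT NS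
    classical
    by_cases hsmall : Fintype.card V ≤ 1
    · obtain ⟨u⟩ := hT.isConnected.nonempty
      have huniq : ∀ x : V, x = u := fun x => Fintype.card_le_one_iff.1 hsmall x u
      have hempty : T.neighborSet u = ∅ := by
        ext z
        simp only [mem_neighborSet, Set.mem_empty_iff_false, iff_false]
        intro h
        exact T.irrefl ((huniq z) ▸ h)
      refine ⟨u, u, Walk.nil, Walk.IsPath.nil, fun x _ => by rw [huniq x]; simp, ?_, ?_⟩ <;>
        (rw [hempty]; simp)
    · push_neg at hsmall
      obtain ⟨ℓ, y0, hnbℓ⟩ := aux_exists_leaf hT hsmall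
      have hy0' : T.Adj ℓ y0 := by
        have : y0 ∈ T.neighborSet ℓ := by rw [hnbℓ]; exact rfl
        exact this
      have hy0ℓ : y0 ≠ ℓ := hy0'.ne'
      have hncl : (T.neighborSet ℓ).ncard = 1 := by rw [hnbℓ]; exact Set.ncard_singleton _
      have conv1 : ∀ x : V, x ≠ y0 → T.neighborSet x \ {ℓ} = T.neighborSet x := by
        intro x hxy
        ext z
        simp only [Set.mem_diff, Set.mem_singleton_iff, mem_neighborSet, and_iff_left_iff_imp]
        intro hadj heq
        apply hxy
        have h2 : x ∈ T.neighborSet ℓ := by rw [← heq]; exact hadj.symm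
        rw [hnbℓ] at h2
        exact h2
      set s₀ : Set V := {x : V | x ≠ ℓ} with hs₀
      set T' : SimpleGraph ↥s₀ := T.induce s₀ with hT'def
      -- neighbor sets
      have himg : ∀ x : ↥s₀, T.neighborSet ↑x \ {ℓ} = Subtype.val '' (T'.neighborSet x) := by
        intro x
        ext z
        simp only [Set.mem_diff, Set.mem_singleton_iff, mem_neighborSet, Set.mem_image]
        constructor
        · rintro ⟨hadj, hzℓ⟩
          exact ⟨⟨z, hzℓ⟩, hadj, rfl⟩
        · rintro ⟨z', hadj, rfl⟩
          exact ⟨hadj, z'.2⟩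
      have hdeg' : ∀ x : ↥s₀, (T'.neighborSet x).ncard = (T.neighborSet ↑x \ {ℓ}).ncard := by
        intro x
        rw [himg x, Set.ncard_image_of_injective _ Subtype.val_injective]
      -- T' is a tree
      have hT' : T'.IsTree := by
        constructor
        · rw [connected_iff]
          refine ⟨?_, ⟨⟨y0, hy0ℓ⟩⟩⟩
          intro a b
          obtain ⟨w0⟩ := hT.isConnected.preconnected ↑a ↑b
          have hP := w0.toPath.2
          have hℓP : ℓ ∉ (w0.toPath : T.Walk ↑a ↑b).support := by
            intro hmem
            have h2' := aux_internal _ hP hmem (Ne.symm a.2) (Ne.symm b.2)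
            rw [hncl] at h2'
            omega
          exact aux_reachable_induce _ (fun x hx => (fun hxl => hℓP (hxl ▸ hx) : x ≠ ℓ)) a.2 b.2
        · intro v'' c hc
          exact hT.IsAcyclic (c.map (inducedHom T s₀))
            ((Walk.map_isCycle_iff_of_injective
              (f := inducedHom T s₀) Subtype.val_injective).2 hc)
      -- NoSpider for T'
      have NS' : ∀ c n1 n2 n3 : ↥s₀, T'.Adj c n1 → T'.Adj c n2 → T'.Adj c n3 →
          n1 ≠ n2 → n1 ≠ n3 → n2 ≠ n3 →
          (∃ m, T'.Adj n1 m ∧ m ≠ c) → (∃ m, T'.Adj n2 m ∧ m ≠ c) →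
          (∃ m, T'.Adj n3 m ∧ m ≠ c) → False := by
        intro c n1 n2 n3 a1 a2 a3 d12 d13 d23 e1 e2 e3
        refine NS ↑c ↑n1 ↑n2 ↑n3 a1 a2 a3 (Subtype.val_injective.ne d12)
          (Subtype.val_injective.ne d13) (Subtype.val_injective.ne d23) ?_ ?_ ?_
        · obtain ⟨m, hm, hmc⟩ := e1; exact ⟨↑m, hm, fun h => hmc (Subtype.ext h)⟩
        · obtain ⟨m, hm, hmc⟩ := e2; exact ⟨↑m, hm, fun h => hmc (Subtype.ext h)⟩
        · obtain ⟨m, hm, hmc⟩ := e3; exact ⟨↑m, hm, fun h => hmc (Subtype.ext h)⟩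
      have hcard' : Fintype.card ↥s₀ ≤ n := by
        have hlt : Fintype.card ↥s₀ < Fintype.card V :=
          Fintype.card_subtype_lt (p := fun x => x ∈ s₀) (x := ℓ) (by simp [hs₀])
        omega
      obtain ⟨u', v', w', hw'p, hcovIH, hu'deg, hv'deg⟩ := ih ↥s₀ T' hcard' hT' NS'
      obtain ⟨W, hWdef⟩ : ∃ W : T.Walk ↑u' ↑v', W = w'.map (inducedHom T s₀) := ⟨_, rfl⟩
      have hWp : W.IsPath := by
        rw [hWdef]
        exact Walk.map_isPath_of_injective (f := inducedHom T s₀) Subtype.val_injective hw'p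
      have hWsupp : W.support = w'.support.map Subtype.val := by
        subst hWdef; exact Walk.support_map _ _
      have hWs : ∀ x ∈ W.support, x ≠ ℓ := by
        intro x hx
        rw [hWsupp, List.mem_map] at hx
        obtain ⟨x', _, rfl⟩ := hx
        exact x'.2
      have hmemW : ∀ x' : ↥s₀, x' ∈ w'.support → (x' : V) ∈ W.support := by
        intro x' hx'
        rw [hWsupp, List.mem_map]
        exact ⟨x', hx', rfl⟩
      have cover' : ∀ x : V, x ≠ ℓ → x ≠ y0 → 2 ≤ (T.neighborSet x).ncard → x ∈ W.support := by
        intro x hxℓ hxy0 hx2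
        have h2 : 2 ≤ (T'.neighborSet ⟨x, hxℓ⟩).ncard := by
          rw [hdeg' ⟨x, hxℓ⟩]
          rw [show ((⟨x, hxℓ⟩ : ↥s₀) : V) = x from rfl, conv1 x hxy0]
          exact hx2
        exact hmemW _ (hcovIH _ h2)
      have hu'd : (T.neighborSet ↑u' \ {ℓ}).ncard ≤ 1 := by rw [← hdeg']; exact hu'deg
      have hv'd : (T.neighborSet ↑v' \ {ℓ}).ncard ≤ 1 := by rw [← hdeg']; exact hv'deg
      by_cases hy0deg : 2 ≤ (T.neighborSet y0).ncard
      swap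
      · -- Case A : y0 has degree ≤ 1 in T
        refine ⟨↑u', ↑v', W, hWp, ?_, ?_, ?_⟩
        · intro x hx2
          have hxℓ : x ≠ ℓ := by rintro rfl; rw [hncl] at hx2; omega
          have hxy0 : x ≠ y0 := by rintro rfl; exact hy0deg hx2
          exact cover' x hxℓ hxy0 hx2
        · by_cases h : (u' : V) = y0
          · rw [h]; omega
          · rw [← conv1 _ h]; exact hu'd
        · by_cases h : (v' : V) = y0
          · rw [h]; omega
          · rw [← conv1 _ h]; exact hv'd
      · by_cases hBi : y0 ∈ W.support ∧ (u' : V) ≠ y0 ∧ (v' : V) ≠ y0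
        · -- Case B-i
          obtain ⟨hy0W, hu'y, hv'y⟩ := hBi
          refine ⟨↑u', ↑v', W, hWp, ?_, ?_, ?_⟩
          · intro x hx2
            have hxℓ : x ≠ ℓ := by rintro rfl; rw [hncl] at hx2; omega
            by_cases hxy0 : x = y0
            · rw [hxy0]; exact hy0W
            · exact cover' x hxℓ hxy0 hx2
          · rw [← conv1 _ hu'y]; exact hu'd
          · rw [← conv1 _ hv'y]; exact hv'd
        · -- remaining cases go through `Claim`
          have hclaim : ∃ (b : V) (W2 : T.Walk y0 b), W2.IsPath ∧
              (∀ x ∈ W2.support, x ≠ ℓ) ∧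
              (∀ x : V, 2 ≤ (T.neighborSet x).ncard → x ≠ ℓ → x ∈ W2.support) ∧
              (T.neighborSet b).ncard ≤ 1 := by
            -- helper for paths starting at y0
            have hredB : ∀ (b : V) (W0 : T.Walk y0 b), W0.IsPath →
                (∀ x ∈ W0.support, x ≠ ℓ) →
                (∀ x : V, x ≠ ℓ → x ≠ y0 → 2 ≤ (T.neighborSet x).ncard → x ∈ W0.support) →
                (T.neighborSet b \ {ℓ}).ncard ≤ 1 →
                ∃ (b : V) (W2 : T.Walk y0 b), W2.IsPath ∧
                  (∀ x ∈ W2.support, x ≠ ℓ) ∧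
                  (∀ x : V, 2 ≤ (T.neighborSet x).ncard → x ≠ ℓ → x ∈ W2.support) ∧
                  (T.neighborSet b).ncard ≤ 1 := by
              intro b W0 hp0 hs0 hc0 hb0
              by_cases hby : b = y0
              · subst hby
                have h0 : W0 = Walk.nil := Walk.isPath_iff_eq_nil.1 hp0
                have hly0 : ℓ ∈ T.neighborSet b := hy0'.symm
                have hd1 : (T.neighborSet b \ {ℓ}).ncard = (T.neighborSet b).ncard - 1 :=
                  Set.ncard_diff_singleton_of_mem hly0
                have hd2 : (T.neighborSet b \ {ℓ}).ncard = 1 := by omega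
                obtain ⟨z', hz'⟩ := Set.ncard_eq_one.1 hd2
                have hz'mem : z' ∈ T.neighborSet b \ {ℓ} := by rw [hz']; exact rfl
                have hyz' : T.Adj b z' := hz'mem.1
                have hz'ℓ : z' ≠ ℓ := hz'mem.2
                have hz'low : (T.neighborSet z').ncard ≤ 1 := by
                  by_contra hh
                  push_neg at hh
                  have hzin := hc0 z' hz'ℓ (hyz'.ne') (by omega)
                  rw [h0] at hzin
                  simp only [Walk.support_nil, List.mem_singleton] at hzin
                  exact hyz'.ne' hzin
                refine ⟨z', Walk.cons hyz' Walk.nil, ?_, ?_, ?_, hz'low⟩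
                · exact Walk.IsPath.nil.cons (by simp [hyz'.ne])
                · intro x hx
                  simp only [Walk.support_cons, Walk.support_nil, List.mem_cons,
                    List.mem_singleton] at hx
                  rcases hx with rfl | rfl | hx
                  · exact hy0ℓ
                  · exact hz'ℓ
                  · simp at hx
                · intro x hx2 hxℓ
                  by_cases hxy : x = b
                  · rw [hxy]; exact Walk.start_mem_support _
                  · have := hc0 x hxℓ hxy hx2
                    rw [h0] at this
                    simp only [Walk.support_nil, List.mem_singleton] at this
                    exact absurd this hxy
              · refine ⟨b, W0, hp0, hs0, ?_, ?_⟩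
                · intro x hx2 hxℓ
                  by_cases hxy : x = y0
                  · rw [hxy]; exact Walk.start_mem_support _
                  · exact hc0 x hxℓ hxy hx2
                · rw [← conv1 b hby]; exact hb0
            by_cases hy0W : y0 ∈ W.support
            · -- y0 is an endpoint of W
              have hor : (u' : V) = y0 ∨ (v' : V) = y0 := by
                by_contra hh
                push_neg at hh
                exact hBi ⟨hy0W, hh.1, hh.2⟩
              rcases hor with h | h
              · exact hredB ↑v' (W.copy h rfl)
                  (by rw [Walk.isPath_copy]; exact hWp)
                  (by intro x hx; rw [Walk.support_copy] at hx; exact hWs x hx)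
                  (by intro x h1 h2 h3; rw [Walk.support_copy]; exact cover' x h1 h2 h3)
                  hv'd
              · exact hredB ↑u' (W.reverse.copy h rfl)
                  (by rw [Walk.isPath_copy]; exact hWp.reverse)
                  (by intro x hx
                      rw [Walk.support_copy, Walk.support_reverse, List.mem_reverse] at hx
                      exact hWs x hx)
                  (by intro x h1 h2 h3
                      rw [Walk.support_copy, Walk.support_reverse, List.mem_reverse]
                      exact cover' x h1 h2 h3)
                  hu'd
            · -- Case C : y0 not on W
              have hy0T' : (T.neighborSet y0 \ {ℓ}).ncard ≤ 1 := by
                by_contra hh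
                push_neg at hh
                have h2 : 2 ≤ (T'.neighborSet ⟨y0, hy0ℓ⟩).ncard := by
                  rw [hdeg' ⟨y0, hy0ℓ⟩]; exact hh
                exact hy0W (hmemW _ (hcovIH _ h2))
              have hly0 : ℓ ∈ T.neighborSet y0 := hy0'.symm
              have hd1 : (T.neighborSet y0 \ {ℓ}).ncard = (T.neighborSet y0).ncard - 1 :=
                Set.ncard_diff_singleton_of_mem hly0
              have hd2 : (T.neighborSet y0 \ {ℓ}).ncard = 1 := by omega
              obtain ⟨z, hz⟩ := Set.ncard_eq_one.1 hd2
              have hzmem : z ∈ T.neighborSet y0 \ {ℓ} := by rw [hz]; exact rfl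
              have hy0z : T.Adj y0 z := hzmem.1
              have hzℓ : z ≠ ℓ := hzmem.2
              have hzy0 : z ≠ y0 := hy0z.ne'
              have hznb : ∀ c', T.Adj y0 c' → c' = ℓ ∨ c' = z := by
                intro c' h
                by_cases hcl : c' = ℓ
                · exact Or.inl hcl
                · right
                  have : c' ∈ T.neighborSet y0 \ {ℓ} := ⟨h, hcl⟩
                  rw [hz] at this
                  exact this
              -- helper for case C with z at the start
              have hredC : ∀ (b : V) (W0 : T.Walk z b), W0.IsPath →
                  (∀ x ∈ W0.support, x ≠ ℓ) →
                  (∀ x : V, x ≠ ℓ → x ≠ y0 → 2 ≤ (T.neighborSet x).ncard → x ∈ W0.support) →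
                  y0 ∉ W0.support →
                  (T.neighborSet b \ {ℓ}).ncard ≤ 1 →
                  ∃ (b : V) (W2 : T.Walk y0 b), W2.IsPath ∧
                    (∀ x ∈ W2.support, x ≠ ℓ) ∧
                    (∀ x : V, 2 ≤ (T.neighborSet x).ncard → x ≠ ℓ → x ∈ W2.support) ∧
                    (T.neighborSet b).ncard ≤ 1 := by
                intro b W0 hp0 hs0 hc0 hy0s hb0
                have hby : b ≠ y0 := fun h => hy0s (h ▸ W0.end_mem_support)
                refine ⟨b, Walk.cons hy0z W0, hp0.cons hy0s, ?_, ?_, ?_⟩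
                · intro x hx
                  rw [Walk.support_cons, List.mem_cons] at hx
                  rcases hx with rfl | hx
                  · exact hy0ℓ
                  · exact hs0 x hx
                · intro x hx2 hxℓ
                  rw [Walk.support_cons, List.mem_cons]
                  by_cases hxy : x = y0
                  · exact Or.inl hxy
                  · exact Or.inr (hc0 x hxℓ hxy hx2)
                · rw [← conv1 b hby]; exact hb0
              by_cases hzW : z ∈ W.support
              · -- C2 : z on W
                by_cases hzu : (u' : V) = z
                · exact hredC ↑v' (W.copy hzu rfl)
                    (by rw [Walk.isPath_copy]; exact hWp)
                    (by intro x hx; rw [Walk.support_copy] at hx; exact hWs x hx)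
                    (by intro x h1 h2 h3; rw [Walk.support_copy]; exact cover' x h1 h2 h3)
                    (by rw [Walk.support_copy]; exact hy0W)
                    hv'd
                · by_cases hzv : (v' : V) = z
                  · exact hredC ↑u' (W.reverse.copy hzv rfl)
                      (by rw [Walk.isPath_copy]; exact hWp.reverse)
                      (by intro x hx
                          rw [Walk.support_copy, Walk.support_reverse, List.mem_reverse] at hx
                          exact hWs x hx)
                      (by intro x h1 h2 h3
                          rw [Walk.support_copy, Walk.support_reverse, List.mem_reverse]
                          exact cover' x h1 h2 h3)
                      (by rw [Walk.support_copy, Walk.support_reverse, List.mem_reverse]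
                          exact hy0W)
                      hu'd
                  · -- z internal on W
                    set W1 : T.Walk ↑u' z := W.takeUntil z hzW with hW1def
                    set W2' : T.Walk z ↑v' := W.dropUntil z hzW with hW2def
                    have hspec : W1.append W2' = W := W.take_spec hzW
                    have hW1p : W1.IsPath := hWp.takeUntil hzW
                    have hW2p : W2'.IsPath := hWp.dropUntil hzW
                    have hsupp_eq : W.support = W1.support ++ W2'.support.tail := by
                      rw [← hspec, Walk.support_append]
                    have hnd : (W1.support ++ W2'.support.tail).Nodup := by
                      rw [← hsupp_eq]; exact hWp.support_nodup
                    have disj := List.disjoint_of_nodup_append hnd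
                    -- y0 not on the pieces
                    have hy0W1 : y0 ∉ W1.support := fun h =>
                      hy0W (by rw [hsupp_eq]; exact List.mem_append_left _ h)
                    have hy0W2 : y0 ∉ W2'.support := by
                      intro h
                      apply hy0W
                      rw [hsupp_eq]
                      rcases List.mem_cons.1 (by rw [← W2'.support_eq_cons] at *; exact h) with
                        rfl | h'
                      · exact List.mem_append_left _ (W1.end_mem_support)
                      · exact List.mem_append_right _ h'
                    -- penultimate vertex z1 of W1
                    obtain ⟨z1, hzz1, q1, hq1⟩ :=
                      Walk.exists_eq_cons_of_ne (fun h => hzu h.symm) W1.reverse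
                    have hq1p : (Walk.cons hzz1 q1).IsPath := hq1 ▸ hW1p.reverse
                    have hz1q1 : z1 ∈ q1.support := q1.start_mem_support
                    have hz1W1 : z1 ∈ W1.support := by
                      rw [← List.mem_reverse, ← Walk.support_reverse, hq1, Walk.support_cons]
                      exact List.mem_cons_of_mem _ hz1q1
                    have hz1z : z1 ≠ z := by
                      intro h
                      rcases (Walk.cons_isPath_iff _ _).1 hq1p with ⟨-, hzq1⟩
                      exact hzq1 (h ▸ hz1q1)
                    -- second vertex z2 of W2'
                    obtain ⟨z2, hzz2, q2, hq2⟩ :=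
                      Walk.exists_eq_cons_of_ne (fun h => hzv h.symm) W2'
                    have hq2p : (Walk.cons hzz2 q2).IsPath := hq2 ▸ hW2p
                    have hz2q2 : z2 ∈ q2.support := q2.start_mem_support
                    have hz2tail : z2 ∈ W2'.support.tail := by
                      rw [hq2, Walk.support_cons]
                      exact hz2q2
                    have hz2z : z2 ≠ z := by
                      intro h
                      rcases (Walk.cons_isPath_iff _ _).1 hq2p with ⟨-, hzq2⟩
                      exact hzq2 (h ▸ hz2q2)
                    by_cases hz1u : z1 = ↑u'
                    · -- drop u' and attach at z via W2'
                      have hq1nil : q1 = (Walk.nil.copy hz1u.symm rfl) := by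
                        have : q1.IsPath := ((Walk.cons_isPath_iff _ _).1 hq1p).1
                        subst hz1u
                        exact Walk.isPath_iff_eq_nil.1 this ▸ rfl
                      have hsuppW1 : W1.support = [↑u', z] := by
                        have h1 : W1.reverse.support = [z, ↑u'] := by
                          rw [hq1, Walk.support_cons, hq1nil]
                          simp
                        have := congrArg List.reverse h1
                        rw [← Walk.support_reverse, Walk.reverse_reverse] at this
                        simpa using this
                      refine hredC ↑v' W2' hW2p
                        (fun x hx => hWs x (by
                          rw [hsupp_eq]
                          rcases List.mem_cons.1 (by rw [← W2'.support_eq_cons] at *; exact hx)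
                            with rfl | h'
                          · exact List.mem_append_left _ W1.end_mem_support
                          · exact List.mem_append_right _ h'))
                        ?_ hy0W2 hv'd
                      intro x hxℓ hxy0 hx2
                      have hxW := cover' x hxℓ hxy0 hx2
                      rw [hsupp_eq] at hxW
                      rcases List.mem_append.1 hxW with h' | h'
                      · rw [hsuppW1] at h'
                        rcases List.mem_cons.1 h' with rfl | h''
                        · exfalso
                          have hu'y0 : (u' : V) ≠ y0 := fun h =>
                            hy0W (h ▸ W.start_mem_support)
                          rw [← conv1 _ hu'y0] at hx2
                          omega
                        · rcases List.mem_singleton.1 h'' with rfl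
                          exact W2'.start_mem_support
                      · exact List.mem_of_mem_tail h'
                    · by_cases hz2v : z2 = ↑v'
                      · -- drop v' and attach at z via W1.reverse
                        have hq2nil : q2 = (Walk.nil.copy hz2v.symm rfl) := by
                          have : q2.IsPath := ((Walk.cons_isPath_iff _ _).1 hq2p).1
                          subst hz2v
                          exact Walk.isPath_iff_eq_nil.1 this ▸ rfl
                        have hsuppW2 : W2'.support = [z, ↑v'] := by
                          rw [hq2, Walk.support_cons, hq2nil]
                          simp
                        refine hredC ↑u' W1.reverse hW1p.reverse
                          (fun x hx => hWs x (by
                            rw [Walk.support_reverse, List.mem_reverse] at hx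
                            rw [hsupp_eq]
                            exact List.mem_append_left _ hx))
                          ?_
                          (by rw [Walk.support_reverse, List.mem_reverse]; exact hy0W1)
                          hu'd
                        intro x hxℓ hxy0 hx2
                        have hxW := cover' x hxℓ hxy0 hx2
                        rw [hsupp_eq] at hxW
                        rw [Walk.support_reverse, List.mem_reverse]
                        rcases List.mem_append.1 hxW with h' | h'
                        · exact h'
                        · exfalso
                          rw [hsuppW2] at h'
                          rcases List.mem_singleton.1 h' with rfl
                          have hv'y0 : (v' : V) ≠ y0 := fun h =>
                            hy0W (h ▸ W.end_mem_support)
                          rw [← conv1 _ hv'y0] at hx2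
                          omega
                      · -- spider at z : contradiction
                        exfalso
                        have hz1W : z1 ∈ W.support := by
                          rw [hsupp_eq]; exact List.mem_append_left _ hz1W1
                        have hz2W : z2 ∈ W.support := by
                          rw [hsupp_eq]; exact List.mem_append_right _ hz2tail
                        have hz1v : z1 ≠ ↑v' := by
                          intro h
                          apply disj hz1W1
                          rw [h]
                          have : (v' : V) ∈ W2'.support := W2'.end_mem_support
                          rw [hq2, Walk.support_cons] at this ⊢
                          rcases List.mem_cons.1 this with h' | h'
                          · exact absurd h' hzv
                          · exact h'
                        have hz2u : z2 ≠ ↑u' := by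
                          intro h
                          exact disj (h ▸ W1.start_mem_support) hz2tail
                        have hz1heavy := aux_internal W hWp hz1W hz1u hz1v
                        have hz2heavy := aux_internal W hWp hz2W hz2u hz2v
                        have hz1z2 : z1 ≠ z2 := fun h => disj hz1W1 (h ▸ hz2tail)
                        have hy0z1 : y0 ≠ z1 := fun h => hy0W (h ▸ hz1W)
                        have hy0z2 : y0 ≠ z2 := fun h => hy0W (h ▸ hz2W)
                        have hℓz : ℓ ≠ z := fun h => (hWs z hzW) h.symm
                        obtain ⟨m1, hm1, hm1z⟩ := aux_exists_nbr_ne hz1heavy z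
                        obtain ⟨m2, hm2, hm2z⟩ := aux_exists_nbr_ne hz2heavy z
                        exact NS z y0 z1 z2 hy0z.symm hzz1 hzz2 hy0z1 hy0z2 hz1z2
                          ⟨ℓ, hy0'.symm, hℓz⟩ ⟨m1, hm1, hm1z⟩ ⟨m2, hm2, hm2z⟩
              · -- C1 : z not on W, contradiction
                exfalso
                have haW : (u' : V) ∈ W.support := W.start_mem_support
                have haℓ : (u' : V) ≠ ℓ := hWs _ haW
                have hay0 : (u' : V) ≠ y0 := fun h => hy0W (h ▸ haW)
                have haz : (u' : V) ≠ z := fun h => hzW (h ▸ haW)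
                have hzlow : (T.neighborSet z).ncard ≤ 1 := by
                  by_contra hh
                  push_neg at hh
                  exact hzW (cover' z hzℓ hzy0 (by omega))
                have hznb' : ∀ c', T.Adj z c' → c' = y0 := by
                  intro c' h
                  exact (Set.ncard_le_one (Set.toFinite _)).1 hzlow c' h y0 hy0z.symm
                obtain ⟨P0⟩ := hT.isConnected.preconnected ↑u' y0
                have hPp : (P0.toPath : T.Walk ↑u' y0).IsPath := P0.toPath.2
                set P : T.Walk y0 ↑u' := (P0.toPath : T.Walk ↑u' y0).reverse with hPdef
                have hPpath : P.IsPath := hPp.reverse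
                obtain ⟨c, hc, q, hq⟩ := Walk.exists_eq_cons_of_ne (Ne.symm hay0) P
                have hqp : (Walk.cons hc q).IsPath := hq ▸ hPpath
                rcases (Walk.cons_isPath_iff _ _).1 hqp with ⟨hqpath, hy0q⟩
                rcases hznb c hc with hcl | hcz
                · -- next vertex is ℓ
                  obtain ⟨c', hc', q', hq'⟩ :=
                    Walk.exists_eq_cons_of_ne (show ℓ ≠ ↑u' from Ne.symm haℓ) (q.copy hcl rfl)
                  have hc'y0 : c' = y0 := by
                    have h3 : c' ∈ T.neighborSet ℓ := hc'
                    rw [hnbℓ] at h3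
                    exact h3
                  have h4 : y0 ∈ (q.copy hcl rfl).support := by
                    rw [hq', Walk.support_cons]
                    exact List.mem_cons_of_mem _ (hc'y0 ▸ q'.start_mem_support)
                  rw [Walk.support_copy] at h4
                  exact hy0q h4
                · -- next vertex is z
                  obtain ⟨c', hc', q', hq'⟩ :=
                    Walk.exists_eq_cons_of_ne (show z ≠ ↑u' from Ne.symm haz) (q.copy hcz rfl)
                  have hc'y0 : c' = y0 := hznb' c' hc'
                  have h4 : y0 ∈ (q.copy hcz rfl).support := by
                    rw [hq', Walk.support_cons]
                    exact List.mem_cons_of_mem _ (hc'y0 ▸ q'.start_mem_support)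
                  rw [Walk.support_copy] at h4
                  exact hy0q h4
          -- assemble from the claim
          obtain ⟨b, W2, hW2p, hW2s, hW2c, hb⟩ := hclaim
          refine ⟨ℓ, b, Walk.cons hy0' W2, hW2p.cons (fun h => hW2s ℓ h rfl), ?_, ?_, hb⟩
          · intro x hx2
            have hxℓ : x ≠ ℓ := by rintro rfl; rw [hncl] at hx2; omega
            rw [Walk.support_cons]
            exact List.mem_cons_of_mem _ (hW2c x hx2 hxℓ)
          · rw [hncl]

lemma aux_adj_idx [DecidableEq V]
    (hup : ∀ ⦃a b : V⦄ (p q : T.Path a b), p = q) {u v : V} (w : T.Walk u v)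
    (hw : w.IsPath) {x y : V} (hadj : T.Adj x y) (hx : x ∈ w.support) (hy : y ∈ w.support) :
    w.support.idxOf y = w.support.idxOf x + 1 ∨
      w.support.idxOf x = w.support.idxOf y + 1 := by
  induction w with
  | nil =>
    simp only [Walk.support_nil, List.mem_singleton] at hx hy
    subst hx; subst hy; exact absurd hadj (T.irrefl)
  | @cons u b v h q ih =>
    rcases (Walk.cons_isPath_iff _ _).1 hw with ⟨hq, huq⟩
    have key : ∀ z' : V, T.Adj u z' → z' ∈ q.support → z' = b := by
      intro z' hzz' hz'q
      by_contra hz'b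
      have hP1 : (Walk.cons h (q.takeUntil z' hz'q)).IsPath :=
        (hq.takeUntil hz'q).cons (fun hmem => huq (q.support_takeUntil_subset hz'q hmem))
      have heq := hup ⟨Walk.cons h (q.takeUntil z' hz'q), hP1⟩ (Path.singleton hzz')
      have heq' : Walk.cons h (q.takeUntil z' hz'q) = (Path.singleton hzz').1 :=
        Subtype.ext_iff.1 heq
      have hlen := congrArg Walk.length heq'
      simp only [Path.singleton, Walk.length_cons, Walk.length_nil] at hlen
      have h0 : (q.takeUntil z' hz'q).length = 0 := by omega
      exact hz'b (Walk.eq_of_length_eq_zero h0).symm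
    rw [Walk.support_cons] at hx hy ⊢
    by_cases hxu : x = u
    · have hyu : y ≠ u := by rintro rfl; rw [hxu] at hadj; exact absurd hadj (T.irrefl)
      have hyq : y ∈ q.support := by
        rcases List.mem_cons.1 hy with rfl | hh
        · exact absurd rfl hyu
        · exact hh
      have hyb : y = b := key y (hxu ▸ hadj) hyq
      subst hxu; subst hyb
      left
      rw [List.idxOf_cons_self, List.idxOf_cons_ne _ (Ne.symm hyu),
        q.support_eq_cons, List.idxOf_cons_self]
    · by_cases hyu : y = u
      · have hxq : x ∈ q.support := by
          rcases List.mem_cons.1 hx with rfl | hh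
          · exact absurd rfl hxu
          · exact hh
        have hxb : x = b := key x (hyu ▸ hadj.symm) hxq
        subst hyu; subst hxb
        right
        rw [List.idxOf_cons_self, List.idxOf_cons_ne _ (Ne.symm hxu),
          q.support_eq_cons, List.idxOf_cons_self]
      · have hxq : x ∈ q.support := by
          rcases List.mem_cons.1 hx with rfl | hh
          · exact absurd rfl hxu
          · exact hh
        have hyq : y ∈ q.support := by
          rcases List.mem_cons.1 hy with rfl | hh
          · exact absurd rfl hyu
          · exact hh
        rw [List.idxOf_cons_ne _ (Ne.symm hxu), List.idxOf_cons_ne _ (Ne.symm hyu)]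
        rcases ih hq hxq hyq with hh | hh
        · left; omega
        · right; omega

lemma caterpillar_to_drawing [Fintype V] (hT : T.IsTree) (hcat : IsCaterpillar T) :
    ∃ (C : V → Bool) (p : V → ℕ),
      (∀ a b : V, T.Adj a b → C a ≠ C b) ∧ Function.Injective p ∧
      ∀ e ∈ T.edgeSet, ∀ f ∈ T.edgeSet, ¬ TLColorCross C p e f := by
  classical
  obtain ⟨u0, v0, w, hwp, hcov⟩ := hcat
  set s : List V := w.support with hs
  have hu0 : u0 ∈ s := w.start_mem_support
  -- the spine neighbor function
  have hnb : ∀ x : V, ∃ c : V, x ∈ s ∨ (T.Adj x c ∧ c ∈ s) := by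
    intro x
    by_cases hx : x ∈ s
    · exact ⟨x, Or.inl hx⟩
    · have hxu0 : x ≠ u0 := fun h => hx (h ▸ hu0)
      obtain ⟨c, hadj, hc⟩ := aux_L_star hT.isConnected hxu0
      refine ⟨c, Or.inr ⟨hadj, ?_⟩⟩
      rcases hc with rfl | hc
      · exact hu0
      · exact hcov c hc
  choose f hf using hnb
  set q : V → ℕ := fun x => if x ∈ s then s.idxOf x else s.idxOf (f x) with hq
  set N : ℕ := Fintype.card V with hN
  have hNpos : 0 < N := Fintype.card_pos_iff.2 ⟨u0⟩
  set ι : V → ℕ := fun x => ((Fintype.equivFin V) x : ℕ) with hι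
  have hιlt : ∀ x, ι x < N := fun x => ((Fintype.equivFin V) x).2
  have hιinj : Function.Injective ι := fun x y h =>
    (Fintype.equivFin V).injective (Fin.ext h)
  set p : V → ℕ := fun x => q x * N + ι x with hp
  have hpinj : Function.Injective p := by
    intro x y h
    simp only [hp] at h
    have h1 : q x = q y := by
      have hx := hιlt x; have hy := hιlt y
      rcases Nat.lt_trichotomy (q x) (q y) with hlt | heq | hlt
      · nlinarith
      · exact heq
      · nlinarith
    apply hιinj
    rw [h1] at h
    omega
  -- q of spine members
  have hqmem : ∀ {x}, x ∈ s → q x = s.idxOf x := fun hx => if_pos hx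
  have hsame : ∀ {x y}, x ∈ s → y ∈ s → q x = q y → x = y := by
    intro x y hx hy hqxy
    rw [hqmem hx, hqmem hy] at hqxy
    exact (List.idxOf_inj hx).1 hqxy
  -- degree-1 off spine
  have huniq : ∀ {x}, x ∉ s → ∀ {a b}, T.Adj x a → T.Adj x b → a = b := by
    intro x hx a b ha hb
    have h1 : (T.neighborSet x).ncard ≤ 1 := by
      by_contra hh
      exact hx (hcov x (by omega))
    exact (Set.ncard_le_one (Set.toFinite _)).1 h1 a ha b hb
  -- edge classification
  have hclass : ∀ {x y}, T.Adj x y →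
      (x ∈ s ∧ y ∈ s ∧ (q y = q x + 1 ∨ q x = q y + 1)) ∨
      (x ∈ s ∧ y ∉ s ∧ q x = q y) ∨ (y ∈ s ∧ x ∉ s ∧ q x = q y) := by
    intro x y hadj
    have hup : ∀ ⦃a b : V⦄ (p q : T.Path a b), p = q := fun {a b} p q => hT.IsAcyclic.path_unique p q
    by_cases hx : x ∈ s <;> by_cases hy : y ∈ s
    · left
      refine ⟨hx, hy, ?_⟩
      rw [hqmem hx, hqmem hy]
      exact aux_adj_idx hup w hwp hadj hx hy
    · refine Or.inr (Or.inl ⟨hx, hy, ?_⟩)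
      rcases (hf y).resolve_left hy with ⟨hadj', hfy⟩
      have : f y = x := huniq hy hadj' hadj.symm
      rw [hqmem hx, hq]
      simp only [if_neg hy, this]
    · refine Or.inr (Or.inr ⟨hy, hx, ?_⟩)
      rcases (hf x).resolve_left hx with ⟨hadj', hfx⟩
      have : f x = y := huniq hx hadj' hadj
      rw [hqmem hy, hq]
      simp only [if_neg hx, this]
    · exfalso
      rcases (hf x).resolve_left hx with ⟨hadj', hfx⟩
      have : f x = y := huniq hx hadj' hadj
      exact hy (this ▸ hfx)
  set C : V → Bool := fun x => (decide (q x % 2 = 0)) == (decide (x ∈ s)) with hCdef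
  have hC : ∀ a b : V, T.Adj a b → C a ≠ C b := by
    intro a b hadj
    rcases hclass hadj with ⟨ha, hb, hpar⟩ | ⟨ha, hb, hqq⟩ | ⟨hb, ha, hqq⟩
    · have : ¬ (q a % 2 = 0 ↔ q b % 2 = 0) := by omega
      simp only [hCdef, ha, hb, decide_true]
      by_cases h1 : q a % 2 = 0 <;> by_cases h2 : q b % 2 = 0 <;>
        simp [h1, h2] <;> tauto
    · simp only [hCdef, ha, hb, hqq, decide_true, decide_false]
      by_cases h1 : q b % 2 = 0 <;> simp [h1]
    · simp only [hCdef, ha, hb, hqq, decide_true, decide_false]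
      by_cases h1 : q a % 2 = 0 <;> simp [h1]
  have hmem : ∀ {x y}, C x = C y → q x = q y → (x ∈ s ↔ y ∈ s) := by
    intro x y hCxy hqxy
    simp only [hCdef, hqxy] at hCxy
    by_cases h1 : q y % 2 = 0 <;> by_cases h2 : x ∈ s <;> by_cases h3 : y ∈ s <;>
      simp [h1, h2, h3] at hCxy ⊢
  have hqle : ∀ {x y}, p x < p y → q x ≤ q y := by
    intro x y hxy
    by_contra hh
    push_neg at hh
    have := hιlt x; have := hιlt y
    simp only [hp] at hxy
    nlinarith
  -- core crossing-freeness
  have core : ∀ a b c d : V, T.Adj a b → T.Adj c d → C b ≠ C a → C c = C a → C d = C b →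
      a ≠ c → b ≠ d → p a < p c → p d < p b → False := by
    intro a b c d hab hcd hCb hCc hCd hac hbd hpac hpdb
    have hik : q a ≤ q c := hqle hpac
    have hmj : q d ≤ q b := hqle hpdb
    rcases hclass hab with ⟨has, hbs, hij⟩ | ⟨has, hbs, hij⟩ | ⟨hbs, has, hij⟩ <;>
      rcases hclass hcd with ⟨hcs, hds, hkm⟩ | ⟨hcs, hds, hkm⟩ | ⟨hds, hcs, hkm⟩
    · -- E1 F1
      by_cases hik' : q a = q c
      · exact hac (hsame has hcs hik')
      · by_cases hmj' : q d = q b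
        · exact hbd (hsame hbs hds hmj'.symm)
        · have h1 : q a = q d := by omega
          have had : a = d := hsame has hds h1
          have h2 : C a = C b := by rw [had]; exact hCd
          exact hCb h2.symm
    · -- E1 F2 : c ∈ s, d ∉ s, q c = q d
      by_cases hik' : q a = q c
      · exact hac (hsame has hcs hik')
      · have hmj' : q d = q b := by omega
        exact hds ((hmem hCd hmj').2 hbs)
    · -- E1 F3 : d ∈ s, c ∉ s
      by_cases hik' : q a = q c
      · exact hcs ((hmem hCc hik'.symm).2 has)
      · have hmj' : q d = q b := by omega
        exact hbd (hsame hbs hds hmj'.symm)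
    · -- E2 F1 : a ∈ s, b ∉ s, q a = q b ; c,d ∈ s
      by_cases hmj' : q d = q b
      · exact hbs ((hmem hCd hmj').1 hds)
      · have hik' : q a = q c := by omega
        exact hac (hsame has hcs hik')
    · -- E2 F2
      have hik' : q a = q c := by omega
      exact hac (hsame has hcs hik')
    · -- E2 F3 : a∈s,b∉s ; d∈s,c∉s
      have hik' : q a = q c := by omega
      exact hcs ((hmem hCc hik'.symm).2 has)
    · -- E3 F1 : b∈s,a∉s ; c,d∈s
      by_cases hmj' : q d = q b
      · exact hbd (hsame hbs hds hmj'.symm)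
      · have hik' : q a = q c := by omega
        exact has ((hmem hCc hik'.symm).1 hcs)
    · -- E3 F2 : b∈s,a∉s ; c∈s,d∉s
      have hik' : q a = q c := by omega
      exact has ((hmem hCc hik'.symm).1 hcs)
    · -- E3 F3
      have hmj' : q d = q b := by omega
      exact hbd (hsame hbs hds hmj'.symm)
  refine ⟨C, p, hC, hpinj, ?_⟩
  rintro e he g hg ⟨a, b, c, d, rfl, rfl, hCb, hCc, hCd, hac, hbd, hint⟩
  have hab : T.Adj a b := (SimpleGraph.mem_edgeSet T).1 he
  have hcd : T.Adj c d := (SimpleGraph.mem_edgeSet T).1 hg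
  rcases hint with ⟨h1, h2⟩ | ⟨h1, h2⟩
  · exact core a b c d hab hcd hCb hCc hCd hac hbd h1 h2
  · exact core c d a b hcd hab (fun h => hCb (hCd.symm.trans (h.trans hCc)))
      hCc.symm hCd.symm (Ne.symm hac) (Ne.symm hbd) h1 h2

lemma bool_eq_of_ne {x y z : Bool} (h1 : x ≠ z) (h2 : y ≠ z) : x = y := by
  revert h1 h2; revert x y z; decide

lemma spider_core {C : V → Bool} {p : V → ℕ}
    (hC : ∀ a b : V, T.Adj a b → C a ≠ C b) (hpinj : Function.Injective p)
    (hnc : ∀ e ∈ T.edgeSet, ∀ f ∈ T.edgeSet, ¬ TLColorCross C p e f)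
    {c a b d b' : V} (hca : T.Adj c a) (hcb : T.Adj c b) (hcd : T.Adj c d)
    (hab : a ≠ b) (hbd : b ≠ d) (hpab : p a < p b) (hpbd : p b < p d)
    (hbb' : T.Adj b b') (hb'c : b' ≠ c) : False := by
  have hCa : C a = C b := bool_eq_of_ne (fun h => hC c a hca h.symm) (fun h => hC c b hcb h.symm)
  have hCd : C d = C b := bool_eq_of_ne (fun h => hC c d hcd h.symm) (fun h => hC c b hcb h.symm)
  have hCc : C c = C b' := bool_eq_of_ne (hC c b hcb) (fun h => hC b b' hbb' h.symm)
  have key1 : ¬ TLColorCross C p s(b, b') s(a, c) :=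
    hnc _ ((T.mem_edgeSet).2 hbb') _ ((T.mem_edgeSet).2 hca.symm)
  have key2 : ¬ TLColorCross C p s(b, b') s(d, c) :=
    hnc _ ((T.mem_edgeSet).2 hbb') _ ((T.mem_edgeSet).2 hcd.symm)
  have hcb' : p c < p b' := by
    rcases Nat.lt_trichotomy (p b') (p c) with hlt | heq | hlt
    · exact absurd ⟨b, b', a, c, rfl, rfl, Ne.symm (hC b b' hbb'), hCa, hCc, hab.symm, hb'c,
        Or.inr ⟨hpab, hlt⟩⟩ key1
    · exact absurd (hpinj heq) hb'c
    · exact hlt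
  exact key2 ⟨b, b', d, c, rfl, rfl, Ne.symm (hC b b' hbb'), hCd, hCc, hbd, hb'c,
    Or.inl ⟨hpbd, hcb'⟩⟩

lemma drawing_nospider {C : V → Bool} {p : V → ℕ}
    (hC : ∀ a b : V, T.Adj a b → C a ≠ C b) (hpinj : Function.Injective p)
    (hnc : ∀ e ∈ T.edgeSet, ∀ f ∈ T.edgeSet, ¬ TLColorCross C p e f)
    {c n1 n2 n3 : V} (h1 : T.Adj c n1) (h2 : T.Adj c n2) (h3 : T.Adj c n3)
    (h12 : n1 ≠ n2) (h13 : n1 ≠ n3) (h23 : n2 ≠ n3)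
    (hm1 : ∃ m, T.Adj n1 m ∧ m ≠ c) (hm2 : ∃ m, T.Adj n2 m ∧ m ≠ c)
    (hm3 : ∃ m, T.Adj n3 m ∧ m ≠ c) : False := by
  obtain ⟨m1, hm1, hm1c⟩ := hm1
  obtain ⟨m2, hm2, hm2c⟩ := hm2
  obtain ⟨m3, hm3, hm3c⟩ := hm3
  have t12 := hpinj.ne h12
  have t13 := hpinj.ne h13
  have t23 := hpinj.ne h23
  rcases Nat.lt_trichotomy (p n1) (p n2) with a12 | e | a12
  · rcases Nat.lt_trichotomy (p n2) (p n3) with a23 | e | a23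
    · exact spider_core hC hpinj hnc h1 h2 h3 h12 h23 a12 a23 hm2 hm2c
    · exact absurd (hpinj e) h23
    · rcases Nat.lt_trichotomy (p n1) (p n3) with a13 | e | a13
      · exact spider_core hC hpinj hnc h1 h3 h2 h13 (Ne.symm h23) a13 a23 hm3 hm3c
      · exact absurd (hpinj e) h13
      · exact spider_core hC hpinj hnc h3 h1 h2 (Ne.symm h13) h12 a13 a12 hm1 hm1c
  · exact absurd (hpinj e) h12
  · rcases Nat.lt_trichotomy (p n1) (p n3) with a13 | e | a13
    · exact spider_core hC hpinj hnc h2 h1 h3 (Ne.symm h12) h13 a12 a13 hm1 hm1c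
    · exact absurd (hpinj e) h13
    · rcases Nat.lt_trichotomy (p n2) (p n3) with a23 | e | a23
      · exact spider_core hC hpinj hnc h2 h3 h1 h23 (Ne.symm h13) a23 a13 hm3 hm3c
      · exact absurd (hpinj e) h23
      · exact spider_core hC hpinj hnc h3 h2 h1 (Ne.symm h23) (Ne.symm h12) a23 a12 hm2 hm2c

end Aux

/-- A finite tree admits a two-layer drawing with zero crossings (with respect to its
bipartition into the two color classes of a proper 2-coloring) if and only if it is a
caterpillar. -/
theorem tree_two_layer_planar_iff_caterpillar {V : Type*} [Fintype V]
    (T : SimpleGraph V) (hT : T.IsTree) :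
    (∃ (C : V → Bool) (p : V → ℕ),
        (∀ a b : V, T.Adj a b → C a ≠ C b) ∧ Function.Injective p ∧
        ∀ e ∈ T.edgeSet, ∀ f ∈ T.edgeSet, ¬ TLColorCross C p e f) ↔
      IsCaterpillar T := by
  constructor
  · rintro ⟨C, p, hC, hpinj, hnc⟩
    obtain ⟨u, v, w, hp, hcov, -, -⟩ :=
      caterpillar_of_nospider (Fintype.card V) V T le_rfl hT
        (fun c n1 n2 n3 a1 a2 a3 d1 d2 d3 e1 e2 e3 =>
          drawing_nospider hC hpinj hnc a1 a2 a3 d1 d2 d3 e1 e2 e3)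
    exact ⟨u, v, w, hp, hcov⟩
  · exact caterpillar_to_drawing hT
end
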